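/- arXiv:1011.3020 — 8 statements merged into one kernel-verified Lean document; each statement's English description precedes it below -/
import Mathlib

section
/- For any natural number k ≥ 1, there exist unit vectors μ_1,...,μ_k and ν_1,...,ν_k in a complex inner product space such that ⟨μ_i, ν_j⟩ = (1/2)·(k/(k−1))·(1 − δ_{i,j}) for all i,j (when k ≥ 2). Consequently γ₂(J − I) ≤ 2(1 − 1/k), where J and I are the k×k all-ones and identity matrices. -/
noncomputable def gamma2 {X Y : Type*} [Fintype X] [Fintype Y] (A : Matrix X Y ℂ) : ENNReal :=
  sInf { c | ∃ (d : ℕ) (u : X → EuclideanSpace ℂ (Fin d)) (v : Y → EuclideanSpace ℂ (Fin d)),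
    (∀ x y, A x y = (inner ℂ (u x) (v y) : ℂ)) ∧
    (∀ x, ENNReal.ofReal (‖u x‖ ^ 2) ≤ c) ∧ (∀ y, ENNReal.ofReal (‖v y‖ ^ 2) ≤ c) }

noncomputable def gamma2F {X Y ι : Type*} [Fintype X] [Fintype Y] [Fintype ι]
    (A : Matrix X Y ℂ) (Z : ι → Matrix X Y ℂ) : ENNReal :=
  sInf { c | ∃ (d : ℕ) (u : X → ι → EuclideanSpace ℂ (Fin d)) (v : Y → ι → EuclideanSpace ℂ (Fin d)),
    (∀ x y, A x y = ∑ j, Z j x y * (inner ℂ (u x j) (v y j) : ℂ)) ∧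
    (∀ x, ENNReal.ofReal (∑ j, ‖u x j‖ ^ 2) ≤ c) ∧ (∀ y, ENNReal.ofReal (∑ j, ‖v y j‖ ^ 2) ≤ c) }

private theorem keySum (k : ℕ) (i j : Fin k) (a b c d : ℂ) :
    ∑ l, (if l = i then a else b) * (if l = j then c else d) =
    (k : ℂ) * (b*d) + (a-b)*d + b*(c-d) + (if i = j then (a-b)*(c-d) else 0) := by
  have : ∀ l : Fin k, (if l = i then a else b) * (if l = j then c else d) =
      b*d + (if l = i then (a-b)*d else 0) + (if l = j then b*(c-d) else 0)
        + (if l = i then (if l = j then (a-b)*(c-d) else 0) else 0) := by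
    intro l
    by_cases h1 : l = i <;> by_cases h2 : l = j <;> by_cases h3 : i = j <;>
      simp_all <;> ring
  simp only [this, Finset.sum_add_distrib, Finset.sum_const, Finset.sum_ite_eq',
    Finset.mem_univ, if_true, Finset.card_univ, Fintype.card_fin]
  by_cases h : i = j <;> simp [h, Finset.sum_ite_eq', nsmul_eq_mul] <;> ring

private theorem keySumR (k : ℕ) (i : Fin k) (x y : ℝ) :
    ∑ l, (if l = i then x else y) = (k : ℝ) * y + (x - y) := by
  have : ∀ l : Fin k, (if l = i then x else y) = y + (if l = i then x - y else 0) := by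
    intro l; by_cases h1 : l = i <;> simp [h1]
  simp only [this, Finset.sum_add_distrib, Finset.sum_const, Finset.sum_ite_eq',
    Finset.mem_univ, if_true, Finset.card_univ, Fintype.card_fin, nsmul_eq_mul]

private noncomputable def vecOf {k : ℕ} (x y : ℝ) (i : Fin k) : EuclideanSpace ℂ (Fin k) :=
  (WithLp.equiv 2 (Fin k → ℂ)).symm (fun l => if l = i then (x:ℂ) else (y:ℂ))

private theorem vecOf_apply {k : ℕ} (x y : ℝ) (i l : Fin k) :
    vecOf x y i l = if l = i then (x:ℂ) else (y:ℂ) := rfl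

private theorem vecOf_norm {k : ℕ} (x y : ℝ) (i : Fin k) :
    ‖vecOf x y i‖ = Real.sqrt (x^2 + ((k:ℝ) - 1) * y^2) := by
  rw [EuclideanSpace.norm_eq]
  congr 1
  have : ∀ l : Fin k, ‖vecOf x y i l‖^2 = (if l = i then x^2 else y^2) := by
    intro l
    rw [vecOf_apply]
    by_cases h : l = i <;> simp [h, Complex.norm_real, sq_abs]
  simp only [this, keySumR k i (x^2) (y^2)]
  ring

private theorem vecOf_inner {k : ℕ} (x y z w : ℝ) (i j : Fin k) :
    (inner ℂ (vecOf x y i) (vecOf z w j) : ℂ) =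
      (k : ℂ) * (y*w) + ((x:ℂ)-y)*w + (y:ℂ)*((z:ℂ)-w)
        + (if i = j then ((x:ℂ)-y)*((z:ℂ)-w) else 0) := by
  have : (inner ℂ (vecOf x y i) (vecOf z w j) : ℂ) =
      ∑ l, (if l = i then (x:ℂ) else (y:ℂ)) * (if l = j then (z:ℂ) else (w:ℂ)) := by
    simp only [PiLp.inner_apply, RCLike.inner_apply, vecOf_apply]
    congr 1; funext l
    by_cases h : l = i <;> simp [h, Complex.conj_ofReal, mul_comm]
  rw [this, keySum]

theorem stmt0 (k : ℕ) (hk : 1 ≤ k) :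
    (2 ≤ k → ∃ (μ ν : Fin k → EuclideanSpace ℂ (Fin k)),
      (∀ i, ‖μ i‖ = 1) ∧ (∀ i, ‖ν i‖ = 1) ∧
      (∀ i j, (inner ℂ (μ i) (ν j) : ℂ) =
        (1 / 2) * ((k : ℂ) / ((k : ℂ) - 1)) * (if i = j then 0 else 1))) ∧
    gamma2 (Matrix.of fun i j : Fin k => if i = j then (0 : ℂ) else 1) ≤
      ENNReal.ofReal (2 * (1 - 1 / (k : ℝ))) := by
  by_cases hk2 : 2 ≤ k
  · -- main case: k ≥ 2
    have hK2 : (2:ℝ) ≤ (k:ℝ) := by exact_mod_cast hk2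
    set K : ℝ := (k : ℝ) with hK
    have hq' : (0:ℝ) ≤ K - 1 := by linarith
    set q : ℝ := Real.sqrt (K - 1) with hqdef
    set t : ℝ := (Real.sqrt K)⁻¹ with htdef
    set r : ℝ := (Real.sqrt 2)⁻¹ with hrdef
    have hq : q ^ 2 = K - 1 := Real.sq_sqrt hq'
    have hq3 : q ^ 3 = (K-1)*q := by rw [pow_succ, hq]
    have hq4 : q ^ 4 = (K-1)^2 := by rw [(by ring : q^4 = (q^2)^2), hq]
    have ht : t ^ 2 = K⁻¹ := by
      rw [htdef, ← Real.sqrt_inv]; exact Real.sq_sqrt (by positivity)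
    have hr : r ^ 2 = 2⁻¹ := by
      rw [hrdef, ← Real.sqrt_inv]; exact Real.sq_sqrt (by norm_num)
    have hKpos : (0:ℝ) < K := by linarith
    have hK1 : (0:ℝ) < K - 1 := by linarith
    set a : ℝ := t*(q+1)*r with hadef
    set b : ℝ := t*(q-1)*r*q/(K-1) with hbdef
    set c : ℝ := t*(1-q)*r with hcdef
    set d : ℝ := t*(q+1)*r*q/(K-1) with hddef
    have h1 : a^2 + (K-1)*b^2 = 1 := by
      rw [hadef, hbdef]
      rw [div_pow, (by ring : (t*(q-1)*r*q)^2 = t^2*r^2*(q^4 - 2*q^3 + q^2)),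
        (by ring : (t*(q+1)*r)^2 = t^2*r^2*(q^2 + 2*q + 1)), hq, hq3, hq4, ht, hr]
      field_simp
      ring
    have h2 : c^2 + (K-1)*d^2 = 1 := by
      rw [hcdef, hddef]
      rw [div_pow, (by ring : (t*(q+1)*r*q)^2 = t^2*r^2*(q^4 + 2*q^3 + q^2)),
        (by ring : (t*(1-q)*r)^2 = t^2*r^2*(q^2 - 2*q + 1)), hq, hq3, hq4, ht, hr]
      field_simp
      ring
    have h3 : a*c + (K-1)*(b*d) = 0 := by
      rw [hadef, hbdef, hcdef, hddef]
      rw [div_mul_div_comm,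
        (by ring : t*(q-1)*r*q*(t*(q+1)*r*q) = t^2*r^2*(q^4 - q^2)),
        (by ring : t*(q+1)*r*(t*(1-q)*r) = t^2*r^2*(1 - q^2) + 0*q^3), hq, hq3, hq4, ht, hr]
      field_simp
      ring
    have h4 : a*d + b*c + (K-2)*(b*d) = K / (2*(K-1)) := by
      rw [hadef, hbdef, hcdef, hddef]
      rw [div_mul_div_comm, div_mul_eq_mul_div, mul_div_assoc',
        (by ring : t*(q-1)*r*q*(t*(q+1)*r*q) = t^2*r^2*(q^4 - q^2)),
        (by ring : t*(q-1)*r*q*(t*(1-q)*r) = t^2*r^2*(0*q^4 + (-1)*q^3 + 2*q^2 + (-1)*q)),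
        (by ring : t*(q+1)*r*(t*(q+1)*r*q) = t^2*r^2*(q^3 + 2*q^2 + q)), hq, hq3, hq4, ht, hr]
      field_simp
      ring
    -- the vectors
    set μ : Fin k → EuclideanSpace ℂ (Fin k) := vecOf a b with hμdef
    set ν : Fin k → EuclideanSpace ℂ (Fin k) := vecOf c d with hνdef
    have hnμ : ∀ i, ‖μ i‖ = 1 := by
      intro i
      rw [hμdef, vecOf_norm]
      rw [show a^2 + ((k:ℝ)-1)*b^2 = 1 from h1]
      exact Real.sqrt_one
    have hnν : ∀ i, ‖ν i‖ = 1 := by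
      intro i
      rw [hνdef, vecOf_norm]
      rw [show c^2 + ((k:ℝ)-1)*d^2 = 1 from h2]
      exact Real.sqrt_one
    have hKC : ((k:ℂ)) ≠ 0 := by
      simp only [Nat.cast_ne_zero]; omega
    have hKC1 : ((k:ℂ) - 1) ≠ 0 := by
      intro h
      have : (k:ℂ) = 1 := by linear_combination h
      rw [show (1:ℂ) = ((1:ℕ):ℂ) by norm_num] at this
      exact absurd (Nat.cast_injective this) (by omega)
    have hinner : ∀ i j, (inner ℂ (μ i) (ν j) : ℂ) =
        (1 / 2) * ((k : ℂ) / ((k : ℂ) - 1)) * (if i = j then 0 else 1) := by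
      intro i j
      rw [hμdef, hνdef, vecOf_inner]
      by_cases h : i = j
      · simp only [h, if_true, mul_zero]
        have : ((k:ℂ)) * (↑b*↑d) + ((a:ℂ)-↑b)*↑d + (↑b:ℂ)*((↑c:ℂ)-↑d)
            + ((↑a:ℂ)-↑b)*((↑c:ℂ)-↑d) = ((a*c + (K-1)*(b*d) : ℝ) : ℂ) := by
          push_cast [hK]
          ring
        rw [this, h3]
        norm_num
      · simp only [h, if_false, mul_one]
        have : ((k:ℂ)) * (↑b*↑d) + ((a:ℂ)-↑b)*↑d + (↑b:ℂ)*((↑c:ℂ)-↑d) + (0:ℂ)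
            = ((a*d + b*c + (K-2)*(b*d) : ℝ) : ℂ) := by
          push_cast [hK]
          ring
        rw [this, h4]
        push_cast [hK]
        field_simp
    refine ⟨fun _ => ⟨μ, ν, hnμ, hnν, hinner⟩, ?_⟩
    -- gamma2 bound
    set s : ℝ := Real.sqrt (2 * (1 - 1/K)) with hsdef
    have hsnn : (0:ℝ) ≤ 2 * (1 - 1/K) := by
      have : 1/K ≤ 1 := by rw [div_le_one hKpos]; linarith
      linarith
    have hs2 : s^2 = 2 * (1 - 1/K) := Real.sq_sqrt hsnn
    apply sInf_le
    refine ⟨k, fun i => (s:ℂ) • μ i, fun j => (s:ℂ) • ν j, ?_, ?_, ?_⟩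
    · intro i j
      rw [inner_smul_left, inner_smul_right, hinner i j]
      simp only [Matrix.of_apply, Complex.conj_ofReal]
      have hss : (s:ℂ) * s = ((2 * (1 - 1/K) : ℝ) : ℂ) := by
        rw [← Complex.ofReal_mul, ← sq, hs2]
      by_cases h : i = j
      · simp [h]
      · simp only [h, if_false]
        rw [show ((s:ℂ)) * ((s:ℂ) * (1 / 2 * ((k:ℂ) / ((k:ℂ) - 1)) * 1)) =
            ((s:ℂ) * s) * (1 / 2 * ((k:ℂ) / ((k:ℂ) - 1))) by ring, hss]
        push_cast [hK]
        field_simp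
    · intro i
      apply ENNReal.ofReal_le_ofReal
      rw [norm_smul, mul_pow, hnμ i, one_pow, mul_one, Complex.norm_real, Real.norm_eq_abs, sq_abs, hs2]
    · intro j
      apply ENNReal.ofReal_le_ofReal
      rw [norm_smul, mul_pow, hnν j, one_pow, mul_one, Complex.norm_real, Real.norm_eq_abs, sq_abs, hs2]
  · -- k = 1
    have hk1 : k = 1 := by omega
    subst hk1
    refine ⟨fun h => absurd h hk2, ?_⟩
    have : ENNReal.ofReal (2 * (1 - 1 / ((1:ℕ) : ℝ))) = 0 := by norm_num
    rw [this]
    apply sInf_le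
    refine ⟨0, fun _ => 0, fun _ => 0, ?_, ?_, ?_⟩
    · intro x y
      have : x = y := Subsingleton.elim x y
      simp [this]
    · intro x; simp
    · intro y; simp
end

section
/- Effective spectral gap lemma: Let Π and Λ be orthogonal projections on a finite-dimensional complex Hilbert space, and let R = (2Π − I)(2Λ − I). Let {|β⟩} be an orthonormal eigenbasis of R with eigenvalues e^{iθ(β)}, θ(β) ∈ (−π, π], and for Θ ≥ 0 let P_Θ be the orthogonal projection onto the span of eigenvectors with |θ(β)| ≤ Θ. If Λ|w⟩ = 0, then ‖P_Θ Π |w⟩‖ ≤ (Θ/2)·‖|w⟩‖. -/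
lemma aux_abs (t : ℝ) : ‖(1 : ℂ) - Complex.exp (t * Complex.I)‖ ≤ |t| := by
  have h1 : ‖(1 : ℂ) - Complex.exp (t * Complex.I)‖ ^ 2 = 2 - 2 * Real.cos t := by
    rw [Complex.exp_mul_I]
    rw [Complex.sq_norm, Complex.normSq_apply]
    simp [Complex.cos_ofReal_re, Complex.sin_ofReal_re]
    nlinarith [Real.sin_sq_add_cos_sq t]
  have h2 : 2 - 2 * Real.cos t ≤ t ^ 2 := by
    have := Real.one_sub_sq_div_two_le_cos (x := t)
    nlinarith
  nlinarith [norm_nonneg ((1 : ℂ) - Complex.exp (t * Complex.I)), abs_nonneg t, sq_abs t]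

theorem stmt1 {d : ℕ} (P L : EuclideanSpace ℂ (Fin d) →L[ℂ] EuclideanSpace ℂ (Fin d))
    (hP1 : IsIdempotentElem P) (hP2 : IsSelfAdjoint P)
    (hL1 : IsIdempotentElem L) (hL2 : IsSelfAdjoint L)
    (b : OrthonormalBasis (Fin d) ℂ (EuclideanSpace ℂ (Fin d)))
    (θ : Fin d → ℝ) (hθ : ∀ i, θ i ∈ Set.Ioc (-Real.pi) Real.pi)
    (hR : ∀ i, ((2 : ℂ) • P - 1) (((2 : ℂ) • L - 1) (b i)) =
      Complex.exp ((θ i : ℂ) * Complex.I) • b i)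
    (Θ : ℝ) (hΘ : 0 ≤ Θ) (w : EuclideanSpace ℂ (Fin d)) (hw : L w = 0) :
    ‖∑ i ∈ Finset.univ.filter (fun i => |θ i| ≤ Θ), (inner ℂ (b i) (P w) : ℂ) • b i‖ ≤
      Θ / 2 * ‖w‖ := by
  classical
  set A : EuclideanSpace ℂ (Fin d) →L[ℂ] EuclideanSpace ℂ (Fin d) := (2 : ℂ) • P - 1 with hA_def
  set B : EuclideanSpace ℂ (Fin d) →L[ℂ] EuclideanSpace ℂ (Fin d) := (2 : ℂ) • L - 1 with hB_def
  have hPP : ∀ x, P (P x) = P x := fun x => by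
    rw [← ContinuousLinearMap.mul_apply, hP1]
  have hLL : ∀ x, L (L x) = L x := fun x => by
    rw [← ContinuousLinearMap.mul_apply, hL1]
  have hAA : ∀ x, A (A x) = x := by
    intro x
    simp only [hA_def, ContinuousLinearMap.sub_apply, ContinuousLinearMap.smul_apply,
      ContinuousLinearMap.one_apply, map_sub, map_smul, hPP]
    module
  have hBB : ∀ x, B (B x) = x := by
    intro x
    simp only [hB_def, ContinuousLinearMap.sub_apply, ContinuousLinearMap.smul_apply,
      ContinuousLinearMap.one_apply, map_sub, map_smul, hLL]
    module
  have hP_sym := ContinuousLinearMap.isSelfAdjoint_iff_isSymmetric.mp hP2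
  have hL_sym := ContinuousLinearMap.isSelfAdjoint_iff_isSymmetric.mp hL2
  have hA_sym : ∀ x y, (inner ℂ (A x) y : ℂ) = inner ℂ x (A y) := by
    intro x y
    simp only [hA_def, ContinuousLinearMap.sub_apply, ContinuousLinearMap.smul_apply,
      ContinuousLinearMap.one_apply, inner_sub_left, inner_sub_right, inner_smul_left,
      inner_smul_right]
    rw [show (inner ℂ (P x) y : ℂ) = inner ℂ x (P y) from hP_sym x y,
      map_ofNat (starRingEnd ℂ) 2]
  have hB_sym : ∀ x y, (inner ℂ (B x) y : ℂ) = inner ℂ x (B y) := by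
    intro x y
    simp only [hB_def, ContinuousLinearMap.sub_apply, ContinuousLinearMap.smul_apply,
      ContinuousLinearMap.one_apply, inner_sub_left, inner_sub_right, inner_smul_left,
      inner_smul_right]
    rw [show (inner ℂ (L x) y : ℂ) = inner ℂ x (L y) from hL_sym x y,
      map_ofNat (starRingEnd ℂ) 2]
  have hBw : B w = -w := by
    simp [hB_def, hw]
  -- B (A (b i)) = exp (-θ i * I) • b i
  have hBA : ∀ i, B (A (b i)) = Complex.exp (-(θ i : ℂ) * Complex.I) • b i := by
    intro i
    have h := congrArg (fun x => B (A x)) (hR i)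
    simp only [hAA, hBB, map_smul] at h
    -- h : b i = exp (θ i * I) • B (A (b i))
    have h2 := congrArg (fun x => Complex.exp (-(θ i : ℂ) * Complex.I) • x) h.symm
    simp only [smul_smul, ← Complex.exp_add] at h2
    rw [show -(θ i : ℂ) * Complex.I + (θ i : ℂ) * Complex.I = 0 by ring] at h2
    simpa using h2
  have hkey : ∀ i, (inner ℂ (b i) (P w) : ℂ) =
      (1 - Complex.exp ((θ i : ℂ) * Complex.I)) / 2 * inner ℂ (b i) w := by
    intro i
    have hABw : A (B w) = w - (2 : ℂ) • P w := by
      rw [hBw]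
      simp [hA_def]
      module
    have h2 : (inner ℂ (b i) (A (B w)) : ℂ) =
        Complex.exp ((θ i : ℂ) * Complex.I) * inner ℂ (b i) w := by
      rw [← hA_sym (b i) (B w), ← hB_sym (A (b i)) w, hBA i, inner_smul_left]
      congr 1
      rw [← Complex.exp_conj]
      congr 1
      simp
    rw [hABw] at h2
    rw [inner_sub_right, inner_smul_right] at h2
    have : (2 : ℂ) ≠ 0 := two_ne_zero
    field_simp
    linear_combination (-1 : ℂ) * h2
  set s : Finset (Fin d) := Finset.univ.filter (fun i => |θ i| ≤ Θ) with hs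
  set S := ∑ i ∈ s, (inner ℂ (b i) (P w) : ℂ) • b i with hS
  have hnormS_sq : ‖S‖ ^ 2 = ∑ i ∈ s, ‖(inner ℂ (b i) (P w) : ℂ)‖ ^ 2 := by
    rw [@norm_sq_eq_re_inner ℂ, hS, b.orthonormal.inner_sum]
    rw [map_sum]
    congr 1
    ext i
    rw [RCLike.conj_mul]
    norm_cast
  have hterm : ∀ i ∈ s, ‖(inner ℂ (b i) (P w) : ℂ)‖ ^ 2 ≤
      (Θ / 2) ^ 2 * ‖(inner ℂ (b i) w : ℂ)‖ ^ 2 := by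
    intro i hi
    have hiΘ : |θ i| ≤ Θ := by
      simpa [hs] using hi
    have h1 : ‖(inner ℂ (b i) (P w) : ℂ)‖ ≤ Θ / 2 * ‖(inner ℂ (b i) w : ℂ)‖ := by
      rw [hkey i, norm_mul, norm_div]
      have := aux_abs (θ i)
      have hle : ‖(1 : ℂ) - Complex.exp ((θ i : ℂ) * Complex.I)‖ ≤ Θ := le_trans this hiΘ
      have h2 : ‖(2 : ℂ)‖ = 2 := by norm_num
      rw [h2]
      gcongr
    calc ‖(inner ℂ (b i) (P w) : ℂ)‖ ^ 2 ≤ (Θ / 2 * ‖(inner ℂ (b i) w : ℂ)‖) ^ 2 := by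
          apply pow_le_pow_left₀ (norm_nonneg _) h1
      _ = (Θ / 2) ^ 2 * ‖(inner ℂ (b i) w : ℂ)‖ ^ 2 := by ring
  have hbessel : ∑ i ∈ s, ‖(inner ℂ (b i) w : ℂ)‖ ^ 2 ≤ ‖w‖ ^ 2 :=
    b.orthonormal.sum_inner_products_le w
  have hfinal : ‖S‖ ^ 2 ≤ (Θ / 2 * ‖w‖) ^ 2 := by
    rw [hnormS_sq]
    calc ∑ i ∈ s, ‖(inner ℂ (b i) (P w) : ℂ)‖ ^ 2
        ≤ ∑ i ∈ s, (Θ / 2) ^ 2 * ‖(inner ℂ (b i) w : ℂ)‖ ^ 2 := Finset.sum_le_sum hterm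
      _ = (Θ / 2) ^ 2 * ∑ i ∈ s, ‖(inner ℂ (b i) w : ℂ)‖ ^ 2 := by rw [← Finset.mul_sum]
      _ ≤ (Θ / 2) ^ 2 * ‖w‖ ^ 2 := by
          apply mul_le_mul_of_nonneg_left hbessel (by positivity)
      _ = (Θ / 2 * ‖w‖) ^ 2 := by ring
  have h0 : (0 : ℝ) ≤ Θ / 2 * ‖w‖ := by positivity
  nlinarith [norm_nonneg S]
end

section
/- If Π is an orthogonal projection and |v⟩, |v''⟩ are vectors with |v''⟩ = (2Π − I)|v'⟩ and |v'⟩ = (2Λ − I)|v⟩ for a projection Λ with Λ|w⟩ = 0, then ⟨v + v'|w⟩ = 0, and hence ‖|v⟩‖² restricted as |v⟩ = P_Θ Π|w⟩ satisfies ‖|v⟩‖² = (1/2)|⟨v − v''|(Π − (I−Π))|w⟩| ≤ (1/2)‖|v⟩ − |v''⟩‖·‖|w⟩‖. -/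
theorem stmt3 {d : ℕ} (P L : EuclideanSpace ℂ (Fin d) →L[ℂ] EuclideanSpace ℂ (Fin d))
    (hP1 : IsIdempotentElem P) (hP2 : IsSelfAdjoint P)
    (hL1 : IsIdempotentElem L) (hL2 : IsSelfAdjoint L)
    (b : OrthonormalBasis (Fin d) ℂ (EuclideanSpace ℂ (Fin d)))
    (θ : Fin d → ℝ) (hθ : ∀ i, θ i ∈ Set.Ioc (-Real.pi) Real.pi)
    (hR : ∀ i, ((2 : ℂ) • P - 1) (((2 : ℂ) • L - 1) (b i)) =
      Complex.exp ((θ i : ℂ) * Complex.I) • b i)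
    (Θ : ℝ) (hΘ : 0 ≤ Θ) (w : EuclideanSpace ℂ (Fin d)) (hw : L w = 0)
    (v v' v'' : EuclideanSpace ℂ (Fin d))
    (hv : v = ∑ i ∈ Finset.univ.filter (fun i => |θ i| ≤ Θ),
      (inner ℂ (b i) (P w) : ℂ) • b i)
    (hv' : v' = ((2 : ℂ) • L - 1) v)
    (hv'' : v'' = ((2 : ℂ) • P - 1) v') :
    (inner ℂ (v + v') w : ℂ) = 0 ∧
    ‖v‖ ^ 2 = 1 / 2 * ‖(inner ℂ (v - v'') (((2 : ℂ) • P - 1) w) : ℂ)‖ ∧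
    ‖v‖ ^ 2 ≤ 1 / 2 * (‖v - v''‖ * ‖w‖) := by
  have hPsym : ∀ x y : EuclideanSpace ℂ (Fin d), (inner ℂ (P x) y : ℂ) = inner ℂ x (P y) :=
    fun x y => ContinuousLinearMap.isSelfAdjoint_iff_isSymmetric.mp hP2 x y
  have hLsym : ∀ x y : EuclideanSpace ℂ (Fin d), (inner ℂ (L x) y : ℂ) = inner ℂ x (L y) :=
    fun x y => ContinuousLinearMap.isSelfAdjoint_iff_isSymmetric.mp hL2 x y
  have hA : ∀ x : EuclideanSpace ℂ (Fin d),
      ((2 : ℂ) • P - 1) x = (2 : ℂ) • P x - x := by intro x; simp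
  have hB : ∀ x : EuclideanSpace ℂ (Fin d),
      ((2 : ℂ) • L - 1) x = (2 : ℂ) • L x - x := by intro x; simp
  have hPP : ∀ x : EuclideanSpace ℂ (Fin d), P (P x) = P x := by
    intro x
    have := congrArg (fun T : EuclideanSpace ℂ (Fin d) →L[ℂ] EuclideanSpace ℂ (Fin d) =>
      T x) hP1
    simpa using this
  have hAA : ∀ x : EuclideanSpace ℂ (Fin d),
      ((2 : ℂ) • P - 1) (((2 : ℂ) • P - 1) x) = x := by
    intro x
    rw [hA, hA]
    rw [map_sub, map_smul, hPP]
    module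
  -- part 1
  have hvw' : (inner ℂ v' w : ℂ) = - inner ℂ v w := by
    rw [hv', hB, inner_sub_left, inner_smul_left]
    have : (inner ℂ (L v) w : ℂ) = 0 := by rw [hLsym v w, hw, inner_zero_right]
    rw [this]
    ring
  have h1 : (inner ℂ (v + v') w : ℂ) = 0 := by
    rw [inner_add_left, hvw']; ring
  -- norm computation
  have hvPw : (inner ℂ v (P w) : ℂ) = (‖v‖ ^ 2 : ℝ) := by
    have hvv : (inner ℂ v v : ℂ) = (‖v‖ ^ 2 : ℝ) := by
      rw [@inner_self_eq_norm_sq_to_K ℂ]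
      norm_num
    rw [← hvv]
    conv_lhs => rw [hv, sum_inner]
    conv_rhs => rw [hv, b.orthonormal.inner_sum]
    refine Finset.sum_congr rfl fun i hi => ?_
    rw [inner_smul_left]
  -- key inner ℂ product
  have hkey : (inner ℂ (v - v'') (((2 : ℂ) • P - 1) w) : ℂ) = 2 * (‖v‖ ^ 2 : ℝ) := by
    have hv''Aw : (inner ℂ v'' (((2 : ℂ) • P - 1) w) : ℂ) = inner ℂ v' w := by
      rw [hv'']
      rw [hA v', inner_sub_left, inner_smul_left, hPsym,
        show (starRingEnd ℂ) 2 = 2 from map_ofNat _ 2]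
      rw [← inner_smul_right, ← inner_sub_right, ← hA, hAA]
    have hvAw : (inner ℂ v (((2 : ℂ) • P - 1) w) : ℂ) = 2 * inner ℂ v (P w) - inner ℂ v w := by
      rw [hA, inner_sub_right, inner_smul_right]
    rw [inner_sub_left, hv''Aw, hvw', hvAw, hvPw]
    ring
  have h2 : ‖v‖ ^ 2 =
      1 / 2 * ‖(inner ℂ (v - v'') (((2 : ℂ) • P - 1) w) : ℂ)‖ := by
    rw [hkey]
    rw [norm_mul]
    simp [Complex.norm_real, abs_of_nonneg (sq_nonneg ‖v‖)]
  refine ⟨h1, h2, ?_⟩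
  -- part 3
  have hAwnorm : ‖((2 : ℂ) • P - 1) w‖ = ‖w‖ := by
    have hAsym : ∀ x y : EuclideanSpace ℂ (Fin d),
        (inner ℂ (((2 : ℂ) • P - 1) x) y : ℂ) = inner ℂ x (((2 : ℂ) • P - 1) y) := by
      intro x y
      rw [hA, hA, inner_sub_left, inner_sub_right, inner_smul_left, inner_smul_right, hPsym,
        show (starRingEnd ℂ) 2 = 2 from map_ofNat _ 2]
    have : (inner ℂ (((2 : ℂ) • P - 1) w) (((2 : ℂ) • P - 1) w) : ℂ) = inner ℂ w w := by
      rw [hAsym, hAA]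
    rw [@inner_self_eq_norm_sq_to_K ℂ, @inner_self_eq_norm_sq_to_K ℂ] at this
    have h' : (‖((2 : ℂ) • P - 1) w‖ : ℝ) ^ 2 = (‖w‖ : ℝ) ^ 2 := by
      exact_mod_cast this
    nlinarith [norm_nonneg (((2 : ℂ) • P - 1) w), norm_nonneg w]
  have hCS := norm_inner_le_norm (𝕜 := ℂ) (v - v'') (((2 : ℂ) • P - 1) w)
  rw [hAwnorm] at hCS
  rw [h2]
  linarith
end

section
/- Schur product bound for filtered γ₂: for matrices A, B of the same size and a family Z of matrices of that size, γ₂(A ∘ B | Z) ≤ γ₂(A | Z) · γ₂(B). -/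
set_option maxHeartbeats 1000000

open scoped ComplexConjugate

noncomputable def tens {d1 d2 : ℕ} (u : EuclideanSpace ℂ (Fin d1)) (p : EuclideanSpace ℂ (Fin d2)) :
    EuclideanSpace ℂ (Fin (d1 * d2)) :=
  WithLp.toLp 2 fun k => u (finProdFinEquiv.symm k).1 * p (finProdFinEquiv.symm k).2

lemma inner_tens {d1 d2 : ℕ} (u v : EuclideanSpace ℂ (Fin d1)) (p q : EuclideanSpace ℂ (Fin d2)) :
    (inner ℂ (tens u p) (tens v q) : ℂ) = inner ℂ u v * inner ℂ p q := by
  simp only [PiLp.inner_apply, RCLike.inner_apply, tens, PiLp.toLp_apply]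
  rw [Finset.sum_mul_sum, ← Fintype.sum_prod_type']
  exact Fintype.sum_equiv finProdFinEquiv.symm _ _ (fun k => by simp [map_mul]; ring)

lemma norm_tens {d1 d2 : ℕ} (u : EuclideanSpace ℂ (Fin d1)) (p : EuclideanSpace ℂ (Fin d2)) :
    ‖tens u p‖ ^ 2 = ‖u‖ ^ 2 * ‖p‖ ^ 2 := by
  rw [EuclideanSpace.norm_eq, EuclideanSpace.norm_eq, EuclideanSpace.norm_eq,
    Real.sq_sqrt (by positivity), Real.sq_sqrt (by positivity), Real.sq_sqrt (by positivity)]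
  rw [Finset.sum_mul_sum, ← Fintype.sum_prod_type']
  exact Fintype.sum_equiv finProdFinEquiv.symm _ _ (fun k => by simp [tens, norm_mul, mul_pow])

lemma gamma2F_key {X Y ι : Type*} [Fintype X] [Fintype Y] [Fintype ι]
    (A B : Matrix X Y ℂ) (Z : ι → Matrix X Y ℂ) {s t : ENNReal}
    (hs : s ∈ { c | ∃ (d : ℕ) (u : X → ι → EuclideanSpace ℂ (Fin d)) (v : Y → ι → EuclideanSpace ℂ (Fin d)),
      (∀ x y, A x y = ∑ j, Z j x y * (inner ℂ (u x j) (v y j) : ℂ)) ∧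
      (∀ x, ENNReal.ofReal (∑ j, ‖u x j‖ ^ 2) ≤ c) ∧ (∀ y, ENNReal.ofReal (∑ j, ‖v y j‖ ^ 2) ≤ c) })
    (ht : t ∈ { c | ∃ (d : ℕ) (u : X → EuclideanSpace ℂ (Fin d)) (v : Y → EuclideanSpace ℂ (Fin d)),
      (∀ x y, B x y = (inner ℂ (u x) (v y) : ℂ)) ∧
      (∀ x, ENNReal.ofReal (‖u x‖ ^ 2) ≤ c) ∧ (∀ y, ENNReal.ofReal (‖v y‖ ^ 2) ≤ c) }) :
    gamma2F (Matrix.hadamard A B) Z ≤ s * t := by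
  obtain ⟨d1, u, v, hA, hu, hv⟩ := hs
  obtain ⟨d2, p, q, hB, hp, hq⟩ := ht
  apply sInf_le
  refine ⟨d1 * d2, fun x j => tens (u x j) (p x), fun y j => tens (v y j) (q y), ?_, ?_, ?_⟩
  · intro x y
    simp only [Matrix.hadamard_apply, hA, hB, inner_tens, Finset.sum_mul, mul_assoc]
  · intro x
    calc ENNReal.ofReal (∑ j, ‖tens (u x j) (p x)‖ ^ 2)
        = ENNReal.ofReal ((∑ j, ‖u x j‖ ^ 2) * ‖p x‖ ^ 2) := by
          congr 1; simp [norm_tens, Finset.sum_mul]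
      _ = ENNReal.ofReal (∑ j, ‖u x j‖ ^ 2) * ENNReal.ofReal (‖p x‖ ^ 2) :=
          ENNReal.ofReal_mul (by positivity)
      _ ≤ s * t := mul_le_mul' (hu x) (hp x)
  · intro y
    calc ENNReal.ofReal (∑ j, ‖tens (v y j) (q y)‖ ^ 2)
        = ENNReal.ofReal ((∑ j, ‖v y j‖ ^ 2) * ‖q y‖ ^ 2) := by
          congr 1; simp [norm_tens, Finset.sum_mul]
      _ = ENNReal.ofReal (∑ j, ‖v y j‖ ^ 2) * ENNReal.ofReal (‖q y‖ ^ 2) :=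
          ENNReal.ofReal_mul (by positivity)
      _ ≤ s * t := mul_le_mul' (hv y) (hq y)

lemma gamma2F_zero {X Y ι : Type*} [Fintype X] [Fintype Y] [Fintype ι]
    (Z : ι → Matrix X Y ℂ) : gamma2F (0 : Matrix X Y ℂ) Z ≤ 0 := by
  apply sInf_le
  exact ⟨0, fun _ _ => 0, fun _ _ => 0, by simp, by simp, by simp⟩

lemma gamma2_eq_zero {X Y : Type*} [Fintype X] [Fintype Y] {B : Matrix X Y ℂ}
    (h : gamma2 B = 0) : B = 0 := by
  ext x y
  by_contra h0
  have hε : (0:ℝ) < ‖B x y‖ := norm_pos_iff.mpr h0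
  have hlt : gamma2 B < ENNReal.ofReal ‖B x y‖ := h ▸ ENNReal.ofReal_pos.mpr hε
  obtain ⟨c, ⟨d, u, v, hB, hu, hv⟩, hc⟩ := sInf_lt_iff.mp hlt
  have hu' : ‖u x‖ ^ 2 < ‖B x y‖ :=
    (ENNReal.ofReal_lt_ofReal_iff hε).mp (lt_of_le_of_lt (hu x) hc)
  have hv' : ‖v y‖ ^ 2 < ‖B x y‖ :=
    (ENNReal.ofReal_lt_ofReal_iff hε).mp (lt_of_le_of_lt (hv y) hc)
  have hle : ‖B x y‖ ≤ ‖u x‖ * ‖v y‖ := by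
    rw [hB x y]; exact norm_inner_le_norm (𝕜 := ℂ) _ _
  nlinarith [norm_nonneg (u x), norm_nonneg (v y)]

lemma gamma2F_eq_zero {X Y ι : Type*} [Fintype X] [Fintype Y] [Fintype ι]
    {A : Matrix X Y ℂ} {Z : ι → Matrix X Y ℂ}
    (h : gamma2F A Z = 0) : A = 0 := by
  ext x y
  by_contra h0
  have hpos : (0:ℝ) < ‖A x y‖ := norm_pos_iff.mpr h0
  set M : ℝ := ∑ j, ‖Z j x y‖ with hM
  have hM0 : 0 ≤ M := Finset.sum_nonneg fun j _ => norm_nonneg _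
  set ε : ℝ := ‖A x y‖ / (M + 1) with hεdef
  have hε : 0 < ε := by positivity
  have hlt : gamma2F A Z < ENNReal.ofReal ε := by rw [h]; exact ENNReal.ofReal_pos.mpr hε
  obtain ⟨c, ⟨d, u, v, hA, hu, hv⟩, hc⟩ := sInf_lt_iff.mp hlt
  have hu' : ∑ j, ‖u x j‖ ^ 2 < ε :=
    (ENNReal.ofReal_lt_ofReal_iff hε).mp (lt_of_le_of_lt (hu x) hc)
  have hv' : ∑ j, ‖v y j‖ ^ 2 < ε :=
    (ENNReal.ofReal_lt_ofReal_iff hε).mp (lt_of_le_of_lt (hv y) hc)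
  have key : ‖A x y‖ ≤ M * ε := by
    calc ‖A x y‖ = ‖∑ j, Z j x y * (inner ℂ (u x j) (v y j) : ℂ)‖ := by rw [hA x y]
      _ ≤ ∑ j, ‖Z j x y * (inner ℂ (u x j) (v y j) : ℂ)‖ := norm_sum_le _ _
      _ = ∑ j, ‖Z j x y‖ * ‖(inner ℂ (u x j) (v y j) : ℂ)‖ := by simp [norm_mul]
      _ ≤ ∑ j, ‖Z j x y‖ * ε := by
          refine Finset.sum_le_sum fun j _ => mul_le_mul_of_nonneg_left ?_ (norm_nonneg _)
          have h1 : ‖u x j‖ ^ 2 ≤ ∑ i, ‖u x i‖ ^ 2 :=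
            Finset.single_le_sum (f := fun i => ‖u x i‖ ^ 2) (fun i _ => sq_nonneg _)
              (Finset.mem_univ j)
          have h2 : ‖v y j‖ ^ 2 ≤ ∑ i, ‖v y i‖ ^ 2 :=
            Finset.single_le_sum (f := fun i => ‖v y i‖ ^ 2) (fun i _ => sq_nonneg _)
              (Finset.mem_univ j)
          have h3 : ‖(inner ℂ (u x j) (v y j) : ℂ)‖ ≤ ‖u x j‖ * ‖v y j‖ :=
            norm_inner_le_norm (𝕜 := ℂ) _ _
          nlinarith [sq_nonneg (‖u x j‖ - ‖v y j‖), norm_nonneg (u x j), norm_nonneg (v y j)]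
      _ = M * ε := by rw [← Finset.sum_mul]
  rw [hεdef, mul_div_assoc', le_div_iff₀ (by positivity : (0:ℝ) < M + 1)] at key
  nlinarith

theorem stmt7 {X Y ι : Type*} [Fintype X] [Fintype Y] [Fintype ι]
    (A B : Matrix X Y ℂ) (Z : ι → Matrix X Y ℂ) :
    gamma2F (Matrix.hadamard A B) Z ≤ gamma2F A Z * gamma2 B := by
  rcases eq_or_ne (gamma2 B) 0 with hb | hb
  · rw [gamma2_eq_zero hb, Matrix.hadamard_zero]
    exact le_trans (gamma2F_zero Z) (zero_le)
  rcases eq_or_ne (gamma2F A Z) 0 with ha | ha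
  · rw [gamma2F_eq_zero ha, Matrix.zero_hadamard]
    exact le_trans (gamma2F_zero Z) (zero_le)
  rcases eq_or_ne (gamma2F A Z) ⊤ with ha' | ha'
  · rw [ha', ENNReal.top_mul hb]; exact le_top
  rcases eq_or_ne (gamma2 B) ⊤ with hb' | hb'
  · rw [hb', ENNReal.mul_top ha]; exact le_top
  have hkey : ∀ c1 c2 : ENNReal, gamma2F A Z < c1 → gamma2 B < c2 →
      gamma2F (Matrix.hadamard A B) Z ≤ c1 * c2 := by
    intro c1 c2 h1 h2
    obtain ⟨s, hs, hs'⟩ := sInf_lt_iff.mp h1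
    obtain ⟨t, ht, ht'⟩ := sInf_lt_iff.mp h2
    exact le_trans (gamma2F_key A B Z hs ht) (mul_le_mul' hs'.le ht'.le)
  refine ENNReal.le_of_forall_pos_le_add fun ε hε hfin => ?_
  set m : ENNReal := gamma2F A Z + gamma2 B + 1 with hm
  have hm0 : m ≠ 0 := by simp [hm]
  have hmt : m ≠ ⊤ := by simp [hm, ha', hb', ENNReal.add_eq_top]
  set δ : ENNReal := min 1 ((ε : ENNReal) / m) with hδ
  have hδ0 : δ ≠ 0 := by
    have h : (0:ENNReal) < (ε : ENNReal) / m :=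
      ENNReal.div_pos (by exact_mod_cast hε.ne') hmt
    exact (lt_min one_pos h).ne'
  have h1 : gamma2F (Matrix.hadamard A B) Z ≤ (gamma2F A Z + δ) * (gamma2 B + δ) :=
    hkey _ _ (ENNReal.lt_add_right ha' hδ0) (ENNReal.lt_add_right hb' hδ0)
  have hδ1 : δ ≤ 1 := min_le_left _ _
  have hδm : δ ≤ (ε : ENNReal) / m := min_le_right _ _
  calc gamma2F (Matrix.hadamard A B) Z ≤ (gamma2F A Z + δ) * (gamma2 B + δ) := h1
    _ = gamma2F A Z * gamma2 B + δ * (gamma2F A Z + gamma2 B + δ) := by ring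
    _ ≤ gamma2F A Z * gamma2 B + ((ε : ENNReal) / m) * m := by
        have h2 : gamma2F A Z + gamma2 B + δ ≤ m := by rw [hm]; gcongr
        gcongr
    _ = gamma2F A Z * gamma2 B + ε := by rw [ENNReal.div_mul_cancel hm0 hmt]
end

section
/- Direct-sum property of filtered γ₂: γ₂(A ⊕ B | {Y_j ⊕ Z_j}) = max( γ₂(A | Y), γ₂(B | Z) ), where ⊕ denotes block-diagonal direct sum. -/
noncomputable def extZ {d D : ℕ} (h : d ≤ D) (u : EuclideanSpace ℂ (Fin d)) :
    EuclideanSpace ℂ (Fin D) := WithLp.toLp 2 (fun i => if h' : (i : ℕ) < d then u ⟨i, h'⟩ else 0)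

lemma inner_extZ {d D : ℕ} (h : d ≤ D) (u v : EuclideanSpace ℂ (Fin d)) :
    (inner ℂ (extZ h u) (extZ h v) : ℂ) = inner ℂ u v := by
  simp only [PiLp.inner_apply, RCLike.inner_apply']
  set F : ℕ → ℂ := fun i => if h' : i < d then (starRingEnd ℂ) (u ⟨i, h'⟩) * v ⟨i, h'⟩ else 0
    with hF
  have h1 : ∀ i : Fin D, (starRingEnd ℂ) (extZ h u i) * extZ h v i = F i := by
    intro i
    simp only [extZ, PiLp.toLp_apply, hF]
    by_cases h' : (i : ℕ) < d <;> simp [h']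
  have h2 : ∀ i : Fin d, (starRingEnd ℂ) (u i) * v i = F i := by
    intro i
    simp only [hF]
    rw [dif_pos i.isLt]
  calc ∑ i : Fin D, (starRingEnd ℂ) (extZ h u i) * extZ h v i
      = ∑ i ∈ Finset.range D, F i := by
        rw [← Fin.sum_univ_eq_sum_range]; exact Finset.sum_congr rfl fun i _ => h1 i
    _ = ∑ i ∈ Finset.range d, F i := by
        refine (Finset.sum_subset (Finset.range_subset_range.mpr h) ?_).symm
        intro i _ hi
        simp only [Finset.mem_range, not_lt] at hi
        simp [hF, Nat.not_lt.mpr hi]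
    _ = ∑ i : Fin d, (starRingEnd ℂ) (u i) * v i := by
        rw [← Fin.sum_univ_eq_sum_range]; exact (Finset.sum_congr rfl fun i _ => (h2 i).symm)

lemma norm_extZ {d D : ℕ} (h : d ≤ D) (u : EuclideanSpace ℂ (Fin d)) :
    ‖extZ h u‖ = ‖u‖ := by
  have h1 : (‖extZ h u‖ : ℝ) ^ 2 = ‖u‖ ^ 2 := by
    rw [← @inner_self_eq_norm_sq ℂ, ← @inner_self_eq_norm_sq ℂ, inner_extZ]
  calc ‖extZ h u‖ = Real.sqrt (‖extZ h u‖ ^ 2) := (Real.sqrt_sq (norm_nonneg _)).symm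
    _ = Real.sqrt (‖u‖ ^ 2) := by rw [h1]
    _ = ‖u‖ := Real.sqrt_sq (norm_nonneg _)

theorem stmt11 {X₁ Y₁ X₂ Y₂ ι : Type*} [Fintype X₁] [Fintype Y₁] [Fintype X₂] [Fintype Y₂]
    [Fintype ι]
    (A : Matrix X₁ Y₁ ℂ) (B : Matrix X₂ Y₂ ℂ)
    (Yf : ι → Matrix X₁ Y₁ ℂ) (Z : ι → Matrix X₂ Y₂ ℂ) :
    gamma2F (Matrix.fromBlocks A 0 0 B) (fun j => Matrix.fromBlocks (Yf j) 0 0 (Z j)) =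
      max (gamma2F A Yf) (gamma2F B Z) := by
  set S₀ := { c | ∃ (d : ℕ) (u : (X₁ ⊕ X₂) → ι → EuclideanSpace ℂ (Fin d))
      (v : (Y₁ ⊕ Y₂) → ι → EuclideanSpace ℂ (Fin d)),
    (∀ x y, Matrix.fromBlocks A 0 0 B x y =
      ∑ j, Matrix.fromBlocks (Yf j) 0 0 (Z j) x y * (inner ℂ (u x j) (v y j) : ℂ)) ∧
    (∀ x, ENNReal.ofReal (∑ j, ‖u x j‖ ^ 2) ≤ c) ∧
    (∀ y, ENNReal.ofReal (∑ j, ‖v y j‖ ^ 2) ≤ c) } with hS₀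
  set S₁ := { c | ∃ (d : ℕ) (u : X₁ → ι → EuclideanSpace ℂ (Fin d))
      (v : Y₁ → ι → EuclideanSpace ℂ (Fin d)),
    (∀ x y, A x y = ∑ j, Yf j x y * (inner ℂ (u x j) (v y j) : ℂ)) ∧
    (∀ x, ENNReal.ofReal (∑ j, ‖u x j‖ ^ 2) ≤ c) ∧
    (∀ y, ENNReal.ofReal (∑ j, ‖v y j‖ ^ 2) ≤ c) } with hS₁
  set S₂ := { c | ∃ (d : ℕ) (u : X₂ → ι → EuclideanSpace ℂ (Fin d))
      (v : Y₂ → ι → EuclideanSpace ℂ (Fin d)),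
    (∀ x y, B x y = ∑ j, Z j x y * (inner ℂ (u x j) (v y j) : ℂ)) ∧
    (∀ x, ENNReal.ofReal (∑ j, ‖u x j‖ ^ 2) ≤ c) ∧
    (∀ y, ENNReal.ofReal (∑ j, ‖v y j‖ ^ 2) ≤ c) } with hS₂
  have e0 : gamma2F (Matrix.fromBlocks A 0 0 B) (fun j => Matrix.fromBlocks (Yf j) 0 0 (Z j))
      = sInf S₀ := rfl
  have e1 : gamma2F A Yf = sInf S₁ := rfl
  have e2 : gamma2F B Z = sInf S₂ := rfl
  rw [e0, e1, e2]
  apply le_antisymm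
  · -- ≤ : combine factorizations
    have key : ∀ c ∈ S₁, ∀ c' ∈ S₂, sInf S₀ ≤ c ⊔ c' := by
      rintro c ⟨d₁, u₁, v₁, hA, hu₁, hv₁⟩ c' ⟨d₂, u₂, v₂, hB, hu₂, hv₂⟩
      apply sInf_le
      refine ⟨max d₁ d₂,
        Sum.elim (fun x j => extZ (le_max_left d₁ d₂) (u₁ x j))
                 (fun x j => extZ (le_max_right d₁ d₂) (u₂ x j)),
        Sum.elim (fun y j => extZ (le_max_left d₁ d₂) (v₁ y j))
                 (fun y j => extZ (le_max_right d₁ d₂) (v₂ y j)), ?_, ?_, ?_⟩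
      · rintro (x | x) (y | y)
        · simp only [Matrix.fromBlocks_apply₁₁, Sum.elim_inl, inner_extZ]; exact hA x y
        · simp [Matrix.fromBlocks_apply₁₂]
        · simp [Matrix.fromBlocks_apply₂₁]
        · simp only [Matrix.fromBlocks_apply₂₂, Sum.elim_inr, inner_extZ]; exact hB x y
      · rintro (x | x)
        · simpa [norm_extZ] using (hu₁ x).trans le_sup_left
        · simpa [norm_extZ] using (hu₂ x).trans le_sup_right
      · rintro (y | y)
        · simpa [norm_extZ] using (hv₁ y).trans le_sup_left
        · simpa [norm_extZ] using (hv₂ y).trans le_sup_right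
    have eq1 : sInf S₁ ⊔ sInf S₂ = ⨅ c : S₁, ⨅ c' : S₂, (c : ENNReal) ⊔ c' := by
      rw [sInf_eq_iInf', sInf_eq_iInf', iInf_sup_eq]
      exact iInf_congr fun c => sup_iInf_eq _ _
    rw [eq1]
    exact le_iInf fun c => le_iInf fun c' => key c c.2 c' c'.2
  · -- ≥ : restrict
    refine sup_le (sInf_le_sInf ?_) (sInf_le_sInf ?_)
    · rintro c ⟨d, u, v, hE, hu, hv⟩
      refine ⟨d, fun x => u (Sum.inl x), fun y => v (Sum.inl y), ?_, fun x => hu _, fun y => hv _⟩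
      intro x y
      simpa [Matrix.fromBlocks_apply₁₁] using hE (Sum.inl x) (Sum.inl y)
    · rintro c ⟨d, u, v, hE, hu, hv⟩
      refine ⟨d, fun x => u (Sum.inr x), fun y => v (Sum.inr y), ?_, fun x => hu _, fun y => hv _⟩
      intro x y
      simpa [Matrix.fromBlocks_apply₂₂] using hE (Sum.inr x) (Sum.inr y)
end

section
/- Output condition, necessity: Let {ρ_x} and {σ_x} be unit vectors in a Hilbert space indexed by the same finite set, with Gram matrices ρ and σ. If Re⟨ρ_x, σ_x⟩ ≥ √(1 − ε) for every x, then γ₂(ρ − σ) ≤ 2√ε. -/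
lemma gamma2_le_of_factor {X Y : Type*} [Fintype X] [Fintype Y]
    {E : Type*} [NormedAddCommGroup E] [InnerProductSpace ℂ E]
    (A : Matrix X Y ℂ) (u : X → E) (v : Y → E)
    (hA : ∀ x y, A x y = (inner ℂ (u x) (v y) : ℂ))
    (c : ℝ) (hu : ∀ x, ‖u x‖ ^ 2 ≤ c) (hv : ∀ y, ‖v y‖ ^ 2 ≤ c) :
    gamma2 A ≤ ENNReal.ofReal c := by
  classical
  set S := Submodule.span ℂ (Set.range u ∪ Set.range v) with hS
  haveI : FiniteDimensional ℂ S :=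
    FiniteDimensional.span_of_finite ℂ ((Set.finite_range u).union (Set.finite_range v))
  set d := Module.finrank ℂ S with hd
  let b := stdOrthonormalBasis ℂ S
  have hum : ∀ x, u x ∈ S := fun x => Submodule.subset_span (Or.inl ⟨x, rfl⟩)
  have hvm : ∀ y, v y ∈ S := fun y => Submodule.subset_span (Or.inr ⟨y, rfl⟩)
  refine sInf_le ?_
  refine ⟨d, fun x => b.repr ⟨u x, hum x⟩, fun y => b.repr ⟨v y, hvm y⟩, ?_, ?_, ?_⟩
  · intro x y
    rw [hA, b.repr.inner_map_map]
    rfl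
  · intro x
    rw [LinearIsometryEquiv.norm_map]
    exact ENNReal.ofReal_le_ofReal (hu x)
  · intro y
    rw [LinearIsometryEquiv.norm_map]
    exact ENNReal.ofReal_le_ofReal (hv y)

theorem stmt15 {X : Type*} [Fintype X] {H : Type*} [NormedAddCommGroup H]
    [InnerProductSpace ℂ H]
    (ρv σv : X → H) (hρ : ∀ x, ‖ρv x‖ = 1) (hσ : ∀ x, ‖σv x‖ = 1)
    (ε : ℝ) (hε0 : 0 ≤ ε) (hε1 : ε ≤ 1)
    (h : ∀ x, Real.sqrt (1 - ε) ≤ ((inner ℂ (ρv x) (σv x) : ℂ)).re) :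
    gamma2 (Matrix.of fun x y =>
        (inner ℂ (ρv x) (ρv y) : ℂ) - (inner ℂ (σv x) (σv y) : ℂ)) ≤
      ENNReal.ofReal (2 * Real.sqrt ε) := by
  rcases eq_or_lt_of_le hε0 with hε | hε
  · -- ε = 0 : ρv = σv and the matrix is zero
    subst hε
    have heq : ∀ x, ρv x = σv x := by
      intro x
      have h1 : (1 : ℝ) ≤ ((inner ℂ (ρv x) (σv x) : ℂ)).re := by
        simpa using h x
      have h2 : ‖ρv x - σv x‖ ^ 2 = 2 - 2 * ((inner ℂ (ρv x) (σv x) : ℂ)).re := by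
        rw [@norm_sub_sq ℂ, hρ, hσ]; simp only [RCLike.re_to_complex]; ring
      have h3 : ‖ρv x - σv x‖ ^ 2 ≤ 0 := by rw [h2]; linarith
      have h4 : ρv x - σv x = 0 := by
        have h5 := norm_nonneg (ρv x - σv x)
        have h6 : ‖ρv x - σv x‖ = 0 := by nlinarith
        exact norm_eq_zero.mp h6
      exact sub_eq_zero.mp h4
    refine gamma2_le_of_factor (E := EuclideanSpace ℂ (Fin 0)) _
      (fun _ => 0) (fun _ => 0) ?_ _ ?_ ?_
    · intro x y
      simp [Matrix.of_apply, heq x, heq y]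
    · intro x; simp [Real.sqrt_zero]
    · intro y; simp [Real.sqrt_zero]
  · -- ε > 0
    set s := Real.sqrt (1 - ε) with hs
    have hs0 : 0 ≤ s := Real.sqrt_nonneg _
    have hs2 : s ^ 2 = 1 - ε := Real.sq_sqrt (by linarith)
    have hs1 : s < 1 := by nlinarith
    have hse : 0 ≤ Real.sqrt ε := Real.sqrt_nonneg _
    have hse2 : Real.sqrt ε ^ 2 = ε := Real.sq_sqrt hε0
    have hsp : 0 < 2 * (1 + s) := by linarith
    have hsm : 0 < 2 * (1 - s) := by linarith
    set α := Real.sqrt (Real.sqrt ε / (2 * (1 + s))) with hα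
    set β := Real.sqrt (Real.sqrt ε / (2 * (1 - s))) with hβ
    have hα0 : 0 ≤ α := Real.sqrt_nonneg _
    have hβ0 : 0 ≤ β := Real.sqrt_nonneg _
    have hα2 : α ^ 2 = Real.sqrt ε / (2 * (1 + s)) :=
      Real.sq_sqrt (div_nonneg hse hsp.le)
    have hβ2 : β ^ 2 = Real.sqrt ε / (2 * (1 - s)) :=
      Real.sq_sqrt (div_nonneg hse hsm.le)
    have hαβ : α * β = 1 / 2 := by
      have h1 : (α * β) ^ 2 = 1 / 4 := by
        rw [mul_pow, hα2, hβ2]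
        rw [div_mul_div_comm]
        rw [show Real.sqrt ε * Real.sqrt ε = ε by nlinarith]
        rw [show (2 * (1 + s)) * (2 * (1 - s)) = 4 * (1 - s ^ 2) by ring, hs2]
        field_simp
        rw [sub_sub_cancel]; exact div_self hε.ne'
      nlinarith [mul_nonneg hα0 hβ0]
    -- the factorization vectors
    set u : X → WithLp 2 (H × H) := fun x =>
      (WithLp.equiv 2 (H × H)).symm
        (((α : ℂ)) • (ρv x + σv x), ((β : ℂ)) • (ρv x - σv x)) with hu
    set v : X → WithLp 2 (H × H) := fun y =>
      (WithLp.equiv 2 (H × H)).symm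
        (((β : ℂ)) • (ρv y - σv y), ((α : ℂ)) • (ρv y + σv y)) with hv
    have key : ∀ x : X, ‖u x‖ ^ 2 ≤ 2 * Real.sqrt ε ∧ ‖v x‖ ^ 2 ≤ 2 * Real.sqrt ε := by
      intro x
      set r := ((inner ℂ (ρv x) (σv x) : ℂ)).re with hr
      have hrs : s ≤ r := h x
      have hplus : ‖ρv x + σv x‖ ^ 2 = 2 + 2 * r := by
        rw [@norm_add_sq ℂ, hρ, hσ]; simp only [RCLike.re_to_complex]; ring
      have hminus : ‖ρv x - σv x‖ ^ 2 = 2 - 2 * r := by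
        rw [@norm_sub_sq ℂ, hρ, hσ]; simp only [RCLike.re_to_complex]; ring
      have hαβle : α ^ 2 ≤ β ^ 2 := by
        rw [hα2, hβ2]
        exact div_le_div_of_nonneg_left hse hsm (by linarith)
      have hbound : α ^ 2 * (2 + 2 * r) + β ^ 2 * (2 - 2 * r) ≤ 2 * Real.sqrt ε := by
        have h1 : α ^ 2 * (2 * (1 + s)) = Real.sqrt ε := by
          rw [hα2]; field_simp
        have h2 : β ^ 2 * (2 * (1 - s)) = Real.sqrt ε := by
          rw [hβ2]; exact div_mul_cancel₀ _ hsm.ne'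
        nlinarith [mul_nonneg (sub_nonneg.2 hrs) (sub_nonneg.2 hαβle)]
      constructor
      · rw [hu]
        rw [show ‖((WithLp.equiv 2 (H × H)).symm
          (((α : ℂ)) • (ρv x + σv x), ((β : ℂ)) • (ρv x - σv x)))‖ ^ 2
          = ‖((α : ℂ)) • (ρv x + σv x)‖ ^ 2 + ‖((β : ℂ)) • (ρv x - σv x)‖ ^ 2 from
          WithLp.prod_norm_sq_eq_of_L2 _]
        rw [norm_smul, norm_smul]
        simp only [Complex.norm_real, Real.norm_eq_abs, abs_of_nonneg hα0, abs_of_nonneg hβ0]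
        calc (α * ‖ρv x + σv x‖) ^ 2 + (β * ‖ρv x - σv x‖) ^ 2
            = α ^ 2 * (2 + 2 * r) + β ^ 2 * (2 - 2 * r) := by
              rw [mul_pow, mul_pow, hplus, hminus]
          _ ≤ 2 * Real.sqrt ε := hbound
      · rw [hv]
        rw [show ‖((WithLp.equiv 2 (H × H)).symm
          (((β : ℂ)) • (ρv x - σv x), ((α : ℂ)) • (ρv x + σv x)))‖ ^ 2
          = ‖((β : ℂ)) • (ρv x - σv x)‖ ^ 2 + ‖((α : ℂ)) • (ρv x + σv x)‖ ^ 2 from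
          WithLp.prod_norm_sq_eq_of_L2 _]
        rw [norm_smul, norm_smul]
        simp only [Complex.norm_real, Real.norm_eq_abs, abs_of_nonneg hα0, abs_of_nonneg hβ0]
        calc (β * ‖ρv x - σv x‖) ^ 2 + (α * ‖ρv x + σv x‖) ^ 2
            = α ^ 2 * (2 + 2 * r) + β ^ 2 * (2 - 2 * r) := by
              rw [mul_pow, mul_pow, hplus, hminus]; ring
          _ ≤ 2 * Real.sqrt ε := hbound
    apply gamma2_le_of_factor _ u v ?_ _ (fun x => (key x).1) (fun y => (key y).2)
    intro x y
    have hc : (α : ℂ) * (β : ℂ) = 1 / 2 := by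
      rw [← Complex.ofReal_mul, hαβ]; norm_num
    simp only [hu, hv, Matrix.of_apply, WithLp.prod_inner_apply, WithLp.equiv_symm_apply,
      WithLp.ofLp_toLp, inner_smul_left, inner_smul_right, Complex.conj_ofReal,
      inner_add_left, inner_add_right, inner_sub_left, inner_sub_right]
    linear_combination (2 * (inner ℂ (σv x) (σv y) : ℂ) - 2 * (inner ℂ (ρv x) (ρv y) : ℂ)) * hc
end

section
/- Output condition, sufficiency: Let {ρ_x}, {σ_x} be finite families of unit vectors in a Hilbert space H with Gram matrices ρ, σ. If γ₂(ρ − σ) ≤ ε, then there exists a unitary U on H (or on H extended by an ancilla) such that Re⟨ρ_x, U σ_x⟩ ≥ 1 − √(2ε) for all x. -/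
open Module

lemma gram_to_unitary {E : Type*} [NormedAddCommGroup E] [InnerProductSpace ℂ E]
    [FiniteDimensional ℂ E] {X : Type*} [Fintype X] (u v : X → E)
    (h : ∀ x y, (inner ℂ (u x) (u y) : ℂ) = inner ℂ (v x) (v y)) :
    ∃ W : E ≃ₗᵢ[ℂ] E, ∀ x, W (u x) = v x := by
  classical
  set Ψ : (X → ℂ) →ₗ[ℂ] E := Fintype.linearCombination ℂ u with hΨ
  set Φ : (X → ℂ) →ₗ[ℂ] E := Fintype.linearCombination ℂ v with hΦ
  have hinner : ∀ a b : X → ℂ, (inner ℂ (Φ a) (Φ b) : ℂ) = inner ℂ (Ψ a) (Ψ b) := by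
    intro a b
    simp only [hΨ, hΦ, Fintype.linearCombination_apply, inner_sum, sum_inner,
      inner_smul_left, inner_smul_right, h]
  have hker : LinearMap.ker Ψ ≤ LinearMap.ker Φ := by
    intro a ha
    rw [LinearMap.mem_ker] at ha ⊢
    have : (inner ℂ (Φ a) (Φ a) : ℂ) = 0 := by rw [hinner, ha, inner_zero_right]
    exact inner_self_eq_zero.mp this
  set g : ↥(LinearMap.range Ψ) →ₗ[ℂ] E :=
    ((LinearMap.ker Ψ).liftQ Φ hker).comp
      ((LinearMap.quotKerEquivRange Ψ).symm.toLinearMap) with hg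
  have hga : ∀ a : X → ℂ, g ⟨Ψ a, LinearMap.mem_range_self _ a⟩ = Φ a := by
    intro a
    have h1 : (LinearMap.quotKerEquivRange Ψ).symm ⟨Ψ a, LinearMap.mem_range_self _ a⟩
        = Submodule.Quotient.mk a := by
      rw [LinearEquiv.symm_apply_eq]
      exact Subtype.ext (LinearMap.quotKerEquivRange_apply_mk _ _).symm
    simp [hg, h1, Submodule.liftQ_apply]
  have hgi : ∀ w w' : ↥(LinearMap.range Ψ),
      (inner ℂ (g w) (g w') : ℂ) = inner ℂ (w : E) (w' : E) := by
    intro w w'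
    obtain ⟨a, ha⟩ := w.2
    obtain ⟨b, hb⟩ := w'.2
    have hw : w = ⟨Ψ a, LinearMap.mem_range_self _ a⟩ := Subtype.ext ha.symm
    have hw' : w' = ⟨Ψ b, LinearMap.mem_range_self _ b⟩ := Subtype.ext hb.symm
    rw [hw, hw', hga, hga, hinner]
  have hnorm : ∀ w : ↥(LinearMap.range Ψ), ‖g w‖ = ‖w‖ := by
    intro w
    rw [@norm_eq_sqrt_re_inner ℂ, @norm_eq_sqrt_re_inner ℂ, hgi]
    rw [← Submodule.coe_inner]
  set G : ↥(LinearMap.range Ψ) →ₗᵢ[ℂ] E := ⟨g, hnorm⟩ with hG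
  set L : E →ₗᵢ[ℂ] E := G.extend with hL
  refine ⟨L.toLinearIsometryEquiv rfl, fun x => ?_⟩
  have hux : Ψ (Pi.single x 1) = u x := by
    simp [hΨ, Fintype.linearCombination_apply, Pi.single_apply]
  have hvx : Φ (Pi.single x 1) = v x := by
    simp [hΦ, Fintype.linearCombination_apply, Pi.single_apply]
  have hmem : u x ∈ LinearMap.range Ψ := ⟨Pi.single x 1, hux⟩
  have : L (u x) = v x := by
    have := G.extend_apply ⟨u x, hmem⟩
    rw [hL]
    rw [show u x = ((⟨u x, hmem⟩ : ↥(LinearMap.range Ψ)) : E) from rfl, this]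
    show g _ = v x
    rw [show (⟨u x, hmem⟩ : ↥(LinearMap.range Ψ))
        = ⟨Ψ (Pi.single x 1), LinearMap.mem_range_self _ _⟩ from Subtype.ext hux.symm]
    rw [hga, hvx]
  rw [L.toLinearIsometryEquiv_apply, this]

lemma gamma2_fact {X : Type*} [Fintype X] (A : Matrix X X ℂ) {ε : ℝ} (hε : 0 ≤ ε)
    (h : gamma2 A ≤ ENNReal.ofReal ε) :
    ∃ (e : ℕ) (α β : X → EuclideanSpace ℂ (Fin e)),
      (∀ x y, A x y = (inner ℂ (α x) (β y) : ℂ)) ∧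
      (∀ x, ‖α x‖ ≤ Real.sqrt (2 * ε)) ∧ (∀ x, ‖β x‖ ≤ Real.sqrt (2 * ε)) := by
  have key : ∀ δ : ℝ, 0 < δ → ENNReal.ofReal ε < ENNReal.ofReal δ →
      ∃ (e : ℕ) (α β : X → EuclideanSpace ℂ (Fin e)),
      (∀ x y, A x y = (inner ℂ (α x) (β y) : ℂ)) ∧
      (∀ x, ‖α x‖ ^ 2 ≤ δ) ∧ (∀ x, ‖β x‖ ^ 2 ≤ δ) := by
    intro δ hδ hlt
    have : gamma2 A < ENNReal.ofReal δ := lt_of_le_of_lt h hlt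
    rw [gamma2, sInf_lt_iff] at this
    obtain ⟨c, ⟨e, α, β, hf, hα, hβ⟩, hc⟩ := this
    refine ⟨e, α, β, hf, fun x => ?_, fun x => ?_⟩
    · exact (ENNReal.ofReal_le_ofReal_iff hδ.le).mp ((hα x).trans hc.le)
    · exact (ENNReal.ofReal_le_ofReal_iff hδ.le).mp ((hβ x).trans hc.le)
  rcases eq_or_lt_of_le hε with h0 | hpos
  · -- ε = 0 : A = 0
    have hA : ∀ x y, A x y = 0 := by
      intro x y
      have habs : ∀ δ : ℝ, 0 < δ → δ ≤ 1 → ‖A x y‖ ≤ δ := by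
        intro δ hδ hδ1
        obtain ⟨e, α, β, hf, hα, hβ⟩ := key δ hδ (by
          rw [← h0]; simpa using hδ)
        rw [hf x y]
        calc ‖(inner ℂ (α x) (β y) : ℂ)‖ ≤ ‖α x‖ * ‖β y‖ := norm_inner_le_norm _ _
          _ ≤ Real.sqrt δ * Real.sqrt δ :=
              mul_le_mul ((Real.le_sqrt (norm_nonneg _) hδ.le).mpr (hα x))
                ((Real.le_sqrt (norm_nonneg _) hδ.le).mpr (hβ y))
                (norm_nonneg _) (Real.sqrt_nonneg _)
          _ = δ := Real.mul_self_sqrt hδ.le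
      by_contra hne
      have hpos : 0 < ‖A x y‖ := norm_pos_iff.mpr hne
      have hle := habs (min (‖A x y‖ / 2) 1) (by positivity) (min_le_right _ _)
      have : ‖A x y‖ ≤ ‖A x y‖ / 2 := le_trans hle (min_le_left _ _)
      linarith
    refine ⟨0, fun _ => 0, fun _ => 0, fun x y => by simp [hA], fun x => by
      simp [Real.sqrt_nonneg], fun x => by simp [Real.sqrt_nonneg]⟩
  · obtain ⟨e, α, β, hf, hα, hβ⟩ := key (2 * ε) (by linarith)
      ((ENNReal.ofReal_lt_ofReal_iff (by linarith)).mpr (by linarith))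
    exact ⟨e, α, β, hf,
      fun x => (Real.le_sqrt (norm_nonneg _) (by linarith)).mpr (hα x),
      fun x => (Real.le_sqrt (norm_nonneg _) (by linarith)).mpr (hβ x)⟩

theorem stmt16 {X : Type*} [Fintype X] {d : ℕ}
    (ρv σv : X → EuclideanSpace ℂ (Fin d))
    (hρ : ∀ x, ‖ρv x‖ = 1) (hσ : ∀ x, ‖σv x‖ = 1)
    (ε : ℝ) (hε : 0 ≤ ε)
    (h : gamma2 (Matrix.of fun x y =>
        (inner ℂ (ρv x) (ρv y) : ℂ) - (inner ℂ (σv x) (σv y) : ℂ)) ≤ ENNReal.ofReal ε) :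
    ∃ (d' : ℕ) (em : EuclideanSpace ℂ (Fin d) →ₗᵢ[ℂ] EuclideanSpace ℂ (Fin d'))
      (U : EuclideanSpace ℂ (Fin d') ≃ₗᵢ[ℂ] EuclideanSpace ℂ (Fin d')),
      ∀ x, 1 - Real.sqrt (2 * ε) ≤ ((inner ℂ (em (ρv x)) (U (em (σv x))) : ℂ)).re := by
  classical
  obtain ⟨e, α, β, hfact, hα, hβ⟩ := gamma2_fact _ hε h
  simp only [Matrix.of_apply] at hfact
  have hsym : ∀ x y, (inner ℂ (α x) (β y) : ℂ) = inner ℂ (β x) (α y) := by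
    intro x y
    have h1 := hfact x y
    have h2 := hfact y x
    have h3 : (starRingEnd ℂ) (inner ℂ (α y) (β x) : ℂ) = inner ℂ (α x) (β y) := by
      rw [← h1, ← h2, map_sub, inner_conj_symm, inner_conj_symm]
    rw [← h3, inner_conj_symm]
  set em0 : EuclideanSpace ℂ (Fin d) →ₗᵢ[ℂ]
      WithLp 2 (EuclideanSpace ℂ (Fin d) × EuclideanSpace ℂ (Fin e)) :=
    { toLinearMap := ((WithLp.linearEquiv 2 ℂ
        (EuclideanSpace ℂ (Fin d) × EuclideanSpace ℂ (Fin e))).symm.toLinearMap).comp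
        (LinearMap.inl ℂ (EuclideanSpace ℂ (Fin d)) (EuclideanSpace ℂ (Fin e))),
      norm_map' := fun x => WithLp.norm_toLp_fst 2 _ _ x } with hem0
  have em0_apply : ∀ x : EuclideanSpace ℂ (Fin d),
      em0 x = (WithLp.equiv 2 _).symm (x, 0) := fun _ => rfl
  set uu : X → WithLp 2 (EuclideanSpace ℂ (Fin d) × EuclideanSpace ℂ (Fin e)) := fun x =>
    (WithLp.equiv 2 _).symm (σv x, (2:ℂ)⁻¹ • (α x + β x)) with huu
  set vv : X → WithLp 2 (EuclideanSpace ℂ (Fin d) × EuclideanSpace ℂ (Fin e)) := fun x =>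
    (WithLp.equiv 2 _).symm (ρv x, (2:ℂ)⁻¹ • (α x - β x)) with hvv
  have hgram : ∀ x y, (inner ℂ (uu x) (uu y) : ℂ) = inner ℂ (vv x) (vv y) := by
    intro x y
    simp only [huu, hvv, WithLp.prod_inner_apply, WithLp.equiv_symm_apply, WithLp.toLp_fst, WithLp.toLp_snd,
      inner_smul_left, inner_smul_right, inner_add_left, inner_add_right,
      inner_sub_left, inner_sub_right, map_inv₀, Complex.conj_ofNat]
    have h1 := hfact x y
    have h2 := hsym x y
    linear_combination (-1 : ℂ) * h1 - (1/2 : ℂ) * h2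
  obtain ⟨W, hW⟩ := gram_to_unitary uu vv hgram
  set J := (stdOrthonormalBasis ℂ
    (WithLp 2 (EuclideanSpace ℂ (Fin d) × EuclideanSpace ℂ (Fin e)))).repr with hJ
  refine ⟨_, J.toLinearIsometry.comp em0, (J.symm.trans W).trans J, fun x => ?_⟩
  have key : (inner ℂ ((J.toLinearIsometry.comp em0) (ρv x))
      (((J.symm.trans W).trans J) ((J.toLinearIsometry.comp em0) (σv x))) : ℂ)
      = inner ℂ (em0 (ρv x)) (W (em0 (σv x))) := by
    simp only [LinearIsometry.coe_comp, Function.comp_apply,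
      LinearIsometryEquiv.coe_toLinearIsometry, LinearIsometryEquiv.trans_apply,
      LinearIsometryEquiv.symm_apply_apply]
    exact LinearIsometryEquiv.inner_map_map J _ _
  set dx : EuclideanSpace ℂ (Fin e) := (2:ℂ)⁻¹ • (α x + β x) with hdx
  set zz : WithLp 2 (EuclideanSpace ℂ (Fin d) × EuclideanSpace ℂ (Fin e)) :=
    (WithLp.equiv 2 _).symm (0, dx) with hzz
  have h0 : ∀ y : EuclideanSpace ℂ (Fin d) × EuclideanSpace ℂ (Fin e),
      (WithLp.equiv 2 _).symm y
      = (WithLp.linearEquiv 2 ℂ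
          (EuclideanSpace ℂ (Fin d) × EuclideanSpace ℂ (Fin e))).symm y := fun y => rfl
  have hadd : uu x = em0 (σv x) + zz := by
    have h4 : ((σv x, dx) : EuclideanSpace ℂ (Fin d) × EuclideanSpace ℂ (Fin e))
        = (σv x, 0) + (0, dx) := by simp
    show (WithLp.linearEquiv 2 ℂ
      (EuclideanSpace ℂ (Fin d) × EuclideanSpace ℂ (Fin e))).symm (σv x, dx)
      = em0 (σv x) + zz
    rw [h4, map_add]
    rfl
  have hWσ : W (em0 (σv x)) = vv x - W zz := by
    have h1 : W (em0 (σv x)) + W zz = vv x := by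
      rw [← map_add, ← hadd, hW]
    exact eq_sub_of_add_eq h1
  have hinner1 : (inner ℂ (em0 (ρv x)) (W (em0 (σv x))) : ℂ)
      = 1 - inner ℂ (em0 (ρv x)) (W zz) := by
    rw [hWσ, inner_sub_right]
    congr 1
    rw [em0_apply, hvv]
    simp only [WithLp.prod_inner_apply, WithLp.equiv_symm_apply, WithLp.toLp_fst, WithLp.toLp_snd,
      inner_zero_left, add_zero]
    rw [@inner_self_eq_norm_sq_to_K ℂ, hρ x]
    norm_num
  have hnd : ‖zz‖ ≤ Real.sqrt (2 * ε) := by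
    rw [hzz, WithLp.equiv_symm_apply, WithLp.norm_toLp_snd, hdx, norm_smul]
    have h2 : ‖(2:ℂ)⁻¹‖ = 2⁻¹ := by norm_num
    rw [h2]
    calc 2⁻¹ * ‖α x + β x‖ ≤ 2⁻¹ * (‖α x‖ + ‖β x‖) := by
          gcongr
          exact norm_add_le _ _
      _ ≤ 2⁻¹ * (Real.sqrt (2 * ε) + Real.sqrt (2 * ε)) := by
          gcongr
          · exact hα x
          · exact hβ x
      _ = Real.sqrt (2 * ε) := by ring
  have hre : ((inner ℂ (em0 (ρv x)) (W zz) : ℂ)).re ≤ Real.sqrt (2 * ε) := by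
    calc ((inner ℂ (em0 (ρv x)) (W zz) : ℂ)).re
        ≤ ‖(inner ℂ (em0 (ρv x)) (W zz) : ℂ)‖ := by
          exact Complex.re_le_norm _
      _ ≤ ‖em0 (ρv x)‖ * ‖W zz‖ := norm_inner_le_norm _ _
      _ = 1 * ‖zz‖ := by rw [em0.norm_map, hρ x, W.norm_map]
      _ ≤ Real.sqrt (2 * ε) := by rw [one_mul]; exact hnd
  rw [key, hinner1]
  simp only [Complex.sub_re, Complex.one_re]
  linarith
end

section
/- Balancing an optimal adversary solution: Let g : C_0 → {0,1} (C_0 ⊆ C^m finite) with dual adversary value d_g = ADV±(g). Then there exists an optimal feasible solution (Ω, W) of the dual SDP (Ω diagonal PSD with trace 1, W ∘ G = 0, Ω ± W ∘ Δ_j ⪰ 0 for all j, ⟨J, W⟩ = d_g) that additionally satisfies d_g Ω ± W ⪰ 0 and Σ_{x: g(x)=1} Ω_{x,x} = Σ_{x: g(x)=0} Ω_{x,x} = 1/2. -/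
open scoped Matrix


/-- Feasibility for the dual adversary SDP of a boolean function `g`. -/
def AdvDualFeasible {X ι C : Type*} [Fintype X] [DecidableEq C]
    (inp : X → ι → C) (g : X → Bool) (Ω W : Matrix X X ℝ) : Prop :=
  Ω.IsDiag ∧ Ω.PosSemidef ∧ Ω.trace = 1 ∧ W.IsSymm ∧
  (∀ x y, g x = g y → W x y = 0) ∧
  (∀ j, (Ω + Matrix.hadamard W
      (Matrix.of fun x y => if inp x j = inp y j then 0 else 1)).PosSemidef ∧
    (Ω - Matrix.hadamard W
      (Matrix.of fun x y => if inp x j = inp y j then 0 else 1)).PosSemidef)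

private lemma quadform_eq {X : Type*} [Fintype X] (M : Matrix X X ℝ) (v : X → ℝ) :
    star v ⬝ᵥ M *ᵥ v = ∑ x, ∑ y, v x * M x y * v y := by
  simp [dotProduct, Matrix.mulVec, Finset.mul_sum, mul_assoc]

private lemma linear_nonneg_slope_zero {a b : ℝ} (h : ∀ t : ℝ, 0 ≤ a * t + b) : a = 0 := by
  by_contra ha
  have h1 := h (-(b + 1) / a)
  have h2 : a * (-(b + 1) / a) = -(b + 1) := by field_simp
  linarith

private lemma psd_offdiag {X : Type*} [Fintype X] [DecidableEq X] {M : Matrix X X ℝ}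
    (h : M.PosSemidef) {x y : X} (hx : M x x = 0) : M x y = 0 := by
  by_cases hxy : x = y
  · subst hxy; exact hx
  have hyx : M y x = M x y := by simpa using h.1.apply x y
  have key : ∀ t : ℝ, 0 ≤ (2 * M x y) * t + M y y := by
    intro t
    have h2 := h.dotProduct_mulVec_nonneg ((Pi.single x t + Pi.single y 1 : X → ℝ))
    rw [show star (Pi.single x t + Pi.single y 1 : X → ℝ)
        = (Pi.single x t + Pi.single y 1 : X → ℝ) from star_trivial _] at h2
    rw [Matrix.mulVec_add, add_dotProduct, dotProduct_add,
      dotProduct_add, single_dotProduct, single_dotProduct,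
      single_dotProduct, single_dotProduct,
      Matrix.mulVec_single, Matrix.mulVec_single] at h2
    simp only [Pi.smul_apply, Matrix.col_apply, op_smul_eq_mul, hx, hyx] at h2
    simp at h2
    linarith [h2]
  have := linear_nonneg_slope_zero key
  linarith

private lemma scale_psd {X : Type*} [Fintype X] [DecidableEq X] {M : Matrix X X ℝ}
    (h : M.PosSemidef) (d : X → ℝ) :
    (Matrix.of fun a b => d a * M a b * d b).PosSemidef := by
  have hD : (Matrix.diagonal d)ᴴ = Matrix.diagonal d := by
    simp [Matrix.diagonal_conjTranspose]
  have h2 := h.mul_mul_conjTranspose_same (Matrix.diagonal d)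
  rw [hD] at h2
  convert h2 using 1
  ext a b
  rw [Matrix.mul_diagonal, Matrix.diagonal_mul]
  simp

private lemma scale_feas {X ι C : Type*} [Fintype X] [DecidableEq X] [DecidableEq C]
    {inp : X → ι → C} {g : X → Bool} {Ω W : Matrix X X ℝ}
    (h : AdvDualFeasible inp g Ω W) (d : X → ℝ)
    (htr : ∑ x, d x ^ 2 * Ω x x = 1) :
    AdvDualFeasible inp g (Matrix.of fun a b => d a * Ω a b * d b)
      (Matrix.of fun a b => d a * W a b * d b) := by
  obtain ⟨hdiag, hpsd, _, hWsymm, hG, hΔ⟩ := h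
  refine ⟨?_, scale_psd hpsd d, ?_, ?_, ?_, ?_⟩
  · intro a b hab
    show d a * Ω a b * d b = 0
    rw [hdiag hab]; ring
  · show Matrix.trace _ = 1
    rw [← htr]
    simp only [Matrix.trace, Matrix.diag, Matrix.of_apply]
    exact Finset.sum_congr rfl fun x _ => by ring
  · rw [Matrix.IsSymm]
    ext a b
    show d b * W b a * d a = d a * W a b * d b
    rw [hWsymm.apply a b]; ring
  · intro a b hab
    show d a * W a b * d b = 0
    rw [hG a b hab]; ring
  · intro j
    have e1 : (Matrix.of fun a b => d a * Ω a b * d b) + Matrix.hadamard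
        (Matrix.of fun a b => d a * W a b * d b)
        (Matrix.of fun x y => if inp x j = inp y j then 0 else 1)
        = Matrix.of fun a b => d a * ((Ω + Matrix.hadamard W
            (Matrix.of fun x y => if inp x j = inp y j then 0 else 1)) a b) * d b := by
      ext a b
      simp only [Matrix.add_apply, Matrix.hadamard_apply, Matrix.of_apply]
      ring
    have e2 : (Matrix.of fun a b => d a * Ω a b * d b) - Matrix.hadamard
        (Matrix.of fun a b => d a * W a b * d b)
        (Matrix.of fun x y => if inp x j = inp y j then 0 else 1)
        = Matrix.of fun a b => d a * ((Ω - Matrix.hadamard W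
            (Matrix.of fun x y => if inp x j = inp y j then 0 else 1)) a b) * d b := by
      ext a b
      simp only [Matrix.sub_apply, Matrix.hadamard_apply, Matrix.of_apply]
      ring
    exact ⟨e1 ▸ scale_psd (hΔ j).1 d, e2 ▸ scale_psd (hΔ j).2 d⟩

set_option maxHeartbeats 1000000 in
theorem stmt18 {X ι C : Type*} [Fintype X] [DecidableEq X] [Fintype ι] [DecidableEq C]
    (inp : X → ι → C) (g : X → Bool) (hsurj : Function.Surjective g)
    (dg : ℝ)
    (hopt : ∃ Ω W, AdvDualFeasible inp g Ω W ∧ ∑ x, ∑ y, W x y = dg)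
    (hbound : ∀ Ω W, AdvDualFeasible inp g Ω W → ∑ x, ∑ y, W x y ≤ dg) :
    ∃ Ω W, AdvDualFeasible inp g Ω W ∧ ∑ x, ∑ y, W x y = dg ∧
      (dg • Ω + W).PosSemidef ∧ (dg • Ω - W).PosSemidef ∧
      ∑ x ∈ Finset.univ.filter (fun x => g x = true), Ω x x = 1 / 2 ∧
      ∑ x ∈ Finset.univ.filter (fun x => g x = false), Ω x x = 1 / 2 := by
  classical
  obtain ⟨Ω, W, hfeas, hsum⟩ := hopt
  obtain ⟨hdiag, hpsd, htr, hWsymm, hG, hΔ⟩ := hfeas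
  have hΩnn : ∀ x, 0 ≤ Ω x x := fun x => by simpa using hpsd.dotProduct_mulVec_nonneg (Pi.single x 1)
  -- dg is nonnegative
  have hdg0 : 0 ≤ dg := by
    have hfeas0 : AdvDualFeasible inp g Ω 0 := by
      refine ⟨hdiag, hpsd, htr, Matrix.isSymm_zero, fun x y _ => by simp, fun j => ?_⟩
      simp only [Matrix.zero_hadamard, add_zero, sub_zero]
      exact ⟨hpsd, hpsd⟩
    simpa using hbound Ω 0 hfeas0
  -- inputs with different g-values must differ in some coordinate
  have hsep : ∀ x y : X, g x ≠ g y → ∃ j, inp x j ≠ inp y j := by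
    intro x y hg
    by_contra hno
    push_neg at hno
    have hxy : x ≠ y := by rintro rfl; exact hg rfl
    set E : Matrix X X ℝ := Matrix.of fun a b =>
      (if a = x then 1 else 0) * (if b = y then (1:ℝ) else 0)
      + (if a = y then 1 else 0) * (if b = x then 1 else 0) with hE
    have hEapply : ∀ a b, E a b = (if a = x then 1 else 0) * (if b = y then (1:ℝ) else 0)
        + (if a = y then 1 else 0) * (if b = x then 1 else 0) := fun a b => rfl
    have hEzero : ∀ a b, g a = g b → E a b = 0 := by
      intro a b hgab
      rw [hEapply]
      rcases eq_or_ne a x with rfl | hax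
      · rcases eq_or_ne b y with rfl | hby
        · exact absurd hgab hg
        · have hay : a ≠ y := fun h => hg (h ▸ rfl)
          simp [hby, hay]
      · rcases eq_or_ne a y with rfl | hay
        · rcases eq_or_ne b x with rfl | hbx
          · exact absurd hgab.symm hg
          · simp [hax, hbx]
        · simp [hax, hay]
    have hfeasE : AdvDualFeasible inp g Ω (W + E) := by
      refine ⟨hdiag, hpsd, htr, ?_, ?_, ?_⟩
      · refine hWsymm.add ?_
        rw [Matrix.IsSymm]
        ext a b
        show E b a = E a b
        rw [hEapply, hEapply]
        ring
      · intro a b hgab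
        show W a b + E a b = 0
        rw [hG a b hgab, hEzero a b hgab]; ring
      · intro j
        have hEΔ : Matrix.hadamard E
            (Matrix.of fun a b => if inp a j = inp b j then (0:ℝ) else 1) = 0 := by
          ext a b
          simp only [Matrix.hadamard_apply, Matrix.zero_apply, Matrix.of_apply]
          by_cases hib : inp a j = inp b j
          · simp [hib]
          · have h1 : ¬(a = x ∧ b = y) := by rintro ⟨rfl, rfl⟩; exact hib (hno j)
            have h2 : ¬(a = y ∧ b = x) := by rintro ⟨rfl, rfl⟩; exact hib ((hno j).symm)
            have hE0 : E a b = 0 := by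
              rw [hEapply]
              rcases eq_or_ne a x with rfl | hax
              · have : b ≠ y := fun h => h1 ⟨rfl, h⟩
                have hay : a ≠ y := by rintro rfl; exact hg rfl
                simp [this, hay]
              · rcases eq_or_ne a y with rfl | hay
                · have : b ≠ x := fun h => h2 ⟨rfl, h⟩
                  simp [hax, this]
                · simp [hax, hay]
            simp [hE0]
        rw [Matrix.add_hadamard, hEΔ, add_zero]
        exact hΔ j
    have hEsum : ∑ a, ∑ b, E a b = 2 := by
      simp only [hEapply]
      have hin : ∀ a : X, ∑ b, ((if a = x then 1 else 0) * (if b = y then (1:ℝ) else 0)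
          + (if a = y then 1 else 0) * (if b = x then 1 else 0))
          = (if a = x then 1 else 0) + (if a = y then 1 else 0) := by
        intro a
        rw [Finset.sum_add_distrib, ← Finset.mul_sum, ← Finset.mul_sum]
        simp [Finset.sum_ite_eq']
      simp only [hin]
      rw [Finset.sum_add_distrib]
      simp [Finset.sum_ite_eq']
      norm_num
    have := hbound Ω (W + E) hfeasE
    have hWE : ∑ a, ∑ b, (W + E) a b = dg + 2 := by
      simp only [Matrix.add_apply, Finset.sum_add_distrib]
      rw [hsum, hEsum]
    linarith
  -- zero diagonal entry of Ω forces the corresponding row of W to vanish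
  have hrow : ∀ x, Ω x x = 0 → ∀ y, W x y = 0 := by
    intro x hx y
    by_cases hg : g x = g y
    · exact hG x y hg
    obtain ⟨j, hj⟩ := hsep x y hg
    have hxy : x ≠ y := by rintro rfl; exact hg rfl
    have hMpsd := (hΔ j).1
    have hMxx : (Ω + Matrix.hadamard W
        (Matrix.of fun a b => if inp a j = inp b j then (0:ℝ) else 1)) x x = 0 := by
      simp [Matrix.add_apply, Matrix.hadamard_apply, hx]
    have hoff := psd_offdiag hMpsd hMxx (y := y)
    have hΩxy : Ω x y = 0 := hdiag hxy
    simp [Matrix.add_apply, Matrix.hadamard_apply, hΩxy, hj] at hoff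
    exact hoff
  -- the quadratic form of the diagonal Ω
  have hΩquad : ∀ v : X → ℝ, ∑ x, ∑ y, v x * Ω x y * v y = ∑ x, v x ^ 2 * Ω x x := by
    intro v
    refine Finset.sum_congr rfl fun x _ => ?_
    rw [Finset.sum_eq_single x]
    · ring
    · intro y _ hyx
      rw [hdiag (Ne.symm hyx)]
      ring
    · intro hxmem
      exact absurd (Finset.mem_univ x) hxmem
  -- the key quadratic inequality
  have hquad : ∀ v : X → ℝ, ∑ x, ∑ y, v x * W x y * v y ≤ dg * ∑ x, v x ^ 2 * Ω x x := by
    intro v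
    have hτnn : 0 ≤ ∑ x, v x ^ 2 * Ω x x :=
      Finset.sum_nonneg fun x _ => mul_nonneg (sq_nonneg _) (hΩnn x)
    rcases hτnn.eq_or_lt with hτ0 | hτpos
    · have hterm := (Finset.sum_eq_zero_iff_of_nonneg
        (fun x _ => mul_nonneg (sq_nonneg _) (hΩnn x))).1 hτ0.symm
      have hzero : ∀ x y, v x * W x y * v y = 0 := by
        intro x y
        rcases mul_eq_zero.1 (hterm x (Finset.mem_univ x)) with h | h
        · rw [sq_eq_zero_iff.1 h]; ring
        · rw [hrow x h y]; ring
      calc ∑ x, ∑ y, v x * W x y * v y = 0 := by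
            exact Finset.sum_eq_zero fun x _ => Finset.sum_eq_zero fun y _ => hzero x y
        _ ≤ dg * ∑ x, v x ^ 2 * Ω x x := by rw [← hτ0, mul_zero]
    · set τ := ∑ x, v x ^ 2 * Ω x x with hτ
      have hss : Real.sqrt τ * Real.sqrt τ = τ := Real.mul_self_sqrt hτnn
      have hsqrtpos : 0 < Real.sqrt τ := Real.sqrt_pos.2 hτpos
      have htr1 : ∑ x, (v x / Real.sqrt τ) ^ 2 * Ω x x = 1 := by
        have hterm : ∀ x : X, (v x / Real.sqrt τ) ^ 2 * Ω x x = v x ^ 2 * Ω x x / τ := by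
          intro x
          conv_rhs => rw [← hss]
          field_simp
        rw [Finset.sum_congr rfl fun x _ => hterm x, ← Finset.sum_div, ← hτ]
        exact div_self hτpos.ne'
      have hfs := scale_feas ⟨hdiag, hpsd, htr, hWsymm, hG, hΔ⟩
        (fun x => v x / Real.sqrt τ) htr1
      have hb := hbound _ _ hfs
      simp only [Matrix.of_apply] at hb
      have hexp : ∑ x, ∑ y, v x / Real.sqrt τ * W x y * (v y / Real.sqrt τ)
          = (∑ x, ∑ y, v x * W x y * v y) / τ := by
        rw [Finset.sum_div]
        refine Finset.sum_congr rfl fun x _ => ?_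
        rw [Finset.sum_div]
        refine Finset.sum_congr rfl fun y _ => ?_
        conv_rhs => rw [← hss]
        field_simp
      rw [hexp, div_le_iff₀ hτpos] at hb
      linarith
  -- the sign-flipped quadratic inequality
  have hquadneg : ∀ v : X → ℝ,
      -(∑ x, ∑ y, v x * W x y * v y) ≤ dg * ∑ x, v x ^ 2 * Ω x x := by
    intro v
    have h1 := hquad (fun x => (if g x = true then (-1:ℝ) else 1) * v x)
    have hL : ∑ x, ∑ y, ((if g x = true then (-1:ℝ) else 1) * v x) * W x y *
        ((if g y = true then (-1:ℝ) else 1) * v y)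
        = -(∑ x, ∑ y, v x * W x y * v y) := by
      simp only [← Finset.sum_neg_distrib]
      refine Finset.sum_congr rfl fun x _ => Finset.sum_congr rfl fun y _ => ?_
      by_cases hg : g x = g y
      · rw [hG x y hg]; ring
      · cases hgx : g x <;> cases hgy : g y
        · exact absurd (hgx.trans hgy.symm) hg
        · simp only [hgx, hgy]; norm_num
        · simp only [hgx, hgy]; norm_num
        · exact absurd (hgx.trans hgy.symm) hg
    have hR : ∑ x, ((if g x = true then (-1:ℝ) else 1) * v x) ^ 2 * Ω x x
        = ∑ x, v x ^ 2 * Ω x x := by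
      refine Finset.sum_congr rfl fun x _ => ?_
      have : ((if g x = true then (-1:ℝ) else 1)) ^ 2 = 1 := by split_ifs <;> norm_num
      rw [mul_pow, this, one_mul]
    rw [hL, hR] at h1
    exact h1
  have hΩsymm : Ω.IsSymm := hdiag.isSymm
  -- the two PSD conclusions for the original optimal pair
  have hsub : (dg • Ω - W).PosSemidef := by
    have hH : (dg • Ω - W).IsHermitian := by
      rw [Matrix.IsHermitian]
      ext a b
      simp only [Matrix.conjTranspose_apply, Matrix.sub_apply, Matrix.smul_apply,
        smul_eq_mul, star_trivial]
      rw [hΩsymm.apply a b, hWsymm.apply a b]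
    refine .of_dotProduct_mulVec_nonneg hH fun v => ?_
    rw [quadform_eq]
    have hE : ∑ x, ∑ y, v x * (dg • Ω - W) x y * v y
        = dg * (∑ x, v x ^ 2 * Ω x x) - ∑ x, ∑ y, v x * W x y * v y := by
      rw [← hΩquad v, Finset.mul_sum, ← Finset.sum_sub_distrib]
      refine Finset.sum_congr rfl fun x _ => ?_
      rw [Finset.mul_sum, ← Finset.sum_sub_distrib]
      refine Finset.sum_congr rfl fun y _ => ?_
      simp only [Matrix.sub_apply, Matrix.smul_apply, smul_eq_mul]
      ring
    rw [hE]
    linarith [hquad v]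
  have hadd : (dg • Ω + W).PosSemidef := by
    have hH : (dg • Ω + W).IsHermitian := by
      rw [Matrix.IsHermitian]
      ext a b
      simp only [Matrix.conjTranspose_apply, Matrix.add_apply, Matrix.smul_apply,
        smul_eq_mul, star_trivial]
      rw [hΩsymm.apply a b, hWsymm.apply a b]
    refine .of_dotProduct_mulVec_nonneg hH fun v => ?_
    rw [quadform_eq]
    have hE : ∑ x, ∑ y, v x * (dg • Ω + W) x y * v y
        = dg * (∑ x, v x ^ 2 * Ω x x) + ∑ x, ∑ y, v x * W x y * v y := by
      rw [← hΩquad v, Finset.mul_sum, ← Finset.sum_add_distrib]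
      refine Finset.sum_congr rfl fun x _ => ?_
      rw [Finset.mul_sum, ← Finset.sum_add_distrib]
      refine Finset.sum_congr rfl fun y _ => ?_
      simp only [Matrix.add_apply, Matrix.smul_apply, smul_eq_mul]
      ring
    rw [hE]
    linarith [hquadneg v]
  rcases hdg0.eq_or_lt with hdgzero | hdgpos
  · -- the degenerate case dg = 0 : use a fresh balanced solution with W = 0
    obtain ⟨a, ha⟩ := hsurj true
    obtain ⟨b, hb⟩ := hsurj false
    have hab : a ≠ b := by rintro rfl; rw [ha] at hb; exact Bool.noConfusion hb
    set f : X → ℝ := fun x => (if x = a then 1/2 else 0) + (if x = b then 1/2 else 0) with hf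
    have hfnn : ∀ x, 0 ≤ f x := by
      intro x
      simp only [hf]
      split_ifs <;> norm_num
    have hpsd0 : (Matrix.diagonal f).PosSemidef := Matrix.posSemidef_diagonal_iff.2 hfnn
    refine ⟨Matrix.diagonal f, 0, ⟨Matrix.isDiag_diagonal _, hpsd0, ?_, Matrix.isSymm_zero,
      fun x y _ => by simp, fun j => ?_⟩, ?_, ?_, ?_, ?_, ?_⟩
    · rw [Matrix.trace_diagonal]
      simp only [hf]
      rw [Finset.sum_add_distrib]
      simp [Finset.sum_ite_eq']
      norm_num
    · simp only [Matrix.zero_hadamard, add_zero, sub_zero]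
      exact ⟨hpsd0, hpsd0⟩
    · simpa using hdgzero
    · rw [← hdgzero]
      simpa using Matrix.PosSemidef.zero
    · rw [← hdgzero]
      simpa using Matrix.PosSemidef.zero
    · rw [Finset.sum_congr rfl fun x _ => Matrix.diagonal_apply_eq f x]
      rw [Finset.sum_eq_single_of_mem a (by simp [ha])]
      · simp only [hf]
        simp [hab]
      · intro x hx hxa
        have hgx : g x = true := (Finset.mem_filter.1 hx).2
        have hxb : x ≠ b := by rintro rfl; rw [hgx] at hb; exact Bool.noConfusion hb
        simp [hf, hxa, hxb]
    · rw [Finset.sum_congr rfl fun x _ => Matrix.diagonal_apply_eq f x]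
      rw [Finset.sum_eq_single_of_mem b (by simp [hb])]
      · simp only [hf]
        simp [Ne.symm hab]
      · intro x hx hxb
        have hgx : g x = false := (Finset.mem_filter.1 hx).2
        have hxa : x ≠ a := by rintro rfl; rw [hgx] at ha; exact Bool.noConfusion ha
        simp [hf, hxa, hxb]
  · -- the main case dg > 0 : the optimal solution is automatically balanced
    have hcongr : Finset.univ.filter (fun x => g x = false)
        = Finset.univ.filter (fun x => ¬ (g x = true)) := by
      apply Finset.filter_congr
      intro x _
      simp [Bool.not_eq_true]
    have htsum : (∑ x ∈ Finset.univ.filter (fun x => g x = true), Ω x x)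
        + (∑ x ∈ Finset.univ.filter (fun x => g x = false), Ω x x) = 1 := by
      rw [hcongr, Finset.sum_filter_add_sum_filter_not]
      simpa [Matrix.trace, Matrix.diag] using htr
    set t := ∑ x ∈ Finset.univ.filter (fun x => g x = true), Ω x x with ht
    set s := ∑ x ∈ Finset.univ.filter (fun x => g x = false), Ω x x with hs
    have htnn : 0 ≤ t := Finset.sum_nonneg fun x _ => hΩnn x
    have hsnn : 0 ≤ s := Finset.sum_nonneg fun x _ => hΩnn x
    have hWzero_of : ∀ (c : Bool), (∀ x, g x = c → Ω x x = 0) → ∀ x y, W x y = 0 := by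
      intro c hc x y
      by_cases hg : g x = g y
      · exact hG x y hg
      · by_cases hgx : g x = c
        · exact hrow x (hc x hgx) y
        · have hgy : g y = c := by
            cases hc1 : g y <;> cases hc2 : g x <;> cases c <;> simp_all
          rw [hWsymm.apply y x]
          exact hrow y (hc y hgy) x
    have htpos : 0 < t := by
      rcases htnn.eq_or_lt with h0 | h
      swap
      · exact h
      exfalso
      have hz : ∀ x, g x = true → Ω x x = 0 := by
        intro x hx
        exact (Finset.sum_eq_zero_iff_of_nonneg (fun x _ => hΩnn x)).1
          (by rw [← ht]; linarith) x (by simp [hx])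
      have hW0 := hWzero_of true hz
      have : dg = 0 := by
        rw [← hsum]
        exact Finset.sum_eq_zero fun x _ => Finset.sum_eq_zero fun y _ => hW0 x y
      linarith
    have hspos : 0 < s := by
      rcases hsnn.eq_or_lt with h0 | h
      swap
      · exact h
      exfalso
      have hz : ∀ x, g x = false → Ω x x = 0 := by
        intro x hx
        exact (Finset.sum_eq_zero_iff_of_nonneg (fun x _ => hΩnn x)).1
          (by rw [← hs]; linarith) x (by simp [hx])
      have hW0 := hWzero_of false hz
      have : dg = 0 := by
        rw [← hsum]
        exact Finset.sum_eq_zero fun x _ => Finset.sum_eq_zero fun y _ => hW0 x y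
      linarith
    have h2t : (0:ℝ) < 2 * t := by linarith
    have h2s : (0:ℝ) < 2 * s := by linarith
    set α := (Real.sqrt (2*t))⁻¹ with hα
    set β := (Real.sqrt (2*s))⁻¹ with hβ
    have hsq_t : Real.sqrt (2*t) * Real.sqrt (2*t) = 2*t := Real.mul_self_sqrt h2t.le
    have hsq_s : Real.sqrt (2*s) * Real.sqrt (2*s) = 2*s := Real.mul_self_sqrt h2s.le
    have htr1 : ∑ x, (if g x = true then α else β) ^ 2 * Ω x x = 1 := by
      rw [← Finset.sum_filter_add_sum_filter_not Finset.univ (fun x => g x = true)]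
      have e1 : ∑ x ∈ Finset.univ.filter (fun x => g x = true),
          (if g x = true then α else β) ^ 2 * Ω x x = α ^ 2 * t := by
        rw [ht, Finset.mul_sum]
        refine Finset.sum_congr rfl fun x hx => ?_
        rw [if_pos (Finset.mem_filter.1 hx).2]
      have e2 : ∑ x ∈ Finset.univ.filter (fun x => ¬ (g x = true)),
          (if g x = true then α else β) ^ 2 * Ω x x = β ^ 2 * s := by
        rw [← hcongr, hs, Finset.mul_sum]
        refine Finset.sum_congr rfl fun x hx => ?_
        have hgx : g x = false := (Finset.mem_filter.1 hx).2
        rw [if_neg (by simp [hgx])]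
      rw [e1, e2]
      have hα2 : α ^ 2 * t = 1/2 := by
        rw [hα, inv_pow, Real.sq_sqrt h2t.le]
        field_simp
      have hβ2 : β ^ 2 * s = 1/2 := by
        rw [hβ, inv_pow, Real.sq_sqrt h2s.le]
        field_simp
      rw [hα2, hβ2]
      norm_num
    have hfs := scale_feas ⟨hdiag, hpsd, htr, hWsymm, hG, hΔ⟩
      (fun x => if g x = true then α else β) htr1
    have hb := hbound _ _ hfs
    simp only [Matrix.of_apply] at hb
    have hterm : ∀ x y, (if g x = true then α else β) * W x y *
        (if g y = true then α else β) = α * β * W x y := by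
      intro x y
      by_cases hg : g x = g y
      · rw [hG x y hg]; ring
      · cases hgx : g x <;> cases hgy : g y
        · exact absurd (hgx.trans hgy.symm) hg
        · simp only [hgx, hgy]
          norm_num
          ring
        · simp only [hgx, hgy]
          norm_num
          ring
        · exact absurd (hgx.trans hgy.symm) hg
    rw [show (∑ x, ∑ y, (if g x = true then α else β) * W x y *
        (if g y = true then α else β)) = α * β * dg from by
      rw [← hsum, Finset.mul_sum]
      exact Finset.sum_congr rfl fun x _ => by
        rw [Finset.mul_sum]
        exact Finset.sum_congr rfl fun y _ => hterm x y] at hb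
    have hαβ : α * β ≤ 1 := le_of_mul_le_mul_right (by linarith) hdgpos
    have h1u : 1 ≤ Real.sqrt (2*t) * Real.sqrt (2*s) := by
      have hu : 0 < Real.sqrt (2*t) * Real.sqrt (2*s) :=
        mul_pos (Real.sqrt_pos.2 h2t) (Real.sqrt_pos.2 h2s)
      have hαβ' : (Real.sqrt (2*t) * Real.sqrt (2*s))⁻¹ ≤ 1 := by
        rw [mul_inv]
        exact hαβ
      nlinarith [hu, hαβ', mul_inv_cancel₀ hu.ne']
    have h4ts : 1 ≤ (2*t) * (2*s) := by
      nlinarith [h1u, Real.sqrt_nonneg (2*t), Real.sqrt_nonneg (2*s), hsq_t, hsq_s]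
    have hteq : t = 1/2 := by
      have hsq0 : (t - s) ^ 2 ≤ 0 := by nlinarith [htsum]
      have : (t - s) ^ 2 = 0 := le_antisymm hsq0 (sq_nonneg _)
      have hts : t = s := by
        have := sq_eq_zero_iff.1 this
        linarith [sub_eq_zero.1 this]
      linarith [htsum]
    have hseq : s = 1/2 := by linarith [htsum]
    refine ⟨Ω, W, ⟨hdiag, hpsd, htr, hWsymm, hG, hΔ⟩, hsum, hadd, hsub, ?_, ?_⟩
    · rw [← ht]; exact hteq
    · rw [← hs]; exact hseq
end
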